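/- arXiv:1712.09881 — 4 statements merged into one kernel-verified Lean document; each statement's English description precedes it below -/
import Mathlib

section
/- Let (Z,(X,Y)) be a hidden Markov model with finite-state aperiodic irreducible hidden chain Z, and suppose there exist a letter a and indices i, j with P(X_i = Y_j = a) > 0. Then γ* := lim_{n→∞} E[LC_n]/n exists and γ* > 0. -/
open MeasureTheory Filter

/-- Length of the longest common subsequence of two words. -/
def LCS {α : Type*} [DecidableEq α] (x y : List α) : ℕ :=
  ((x.sublists.filter (fun s => decide (s.Sublist y))).map List.length).foldr max 0

/-- The word `X_a, …, X_{a+len-1}` of the (1-indexed) sequence `X`. -/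
def word {α : Type*} (X : ℕ → α) (a len : ℕ) : List α :=
  (List.range len).map (fun i => X (a + i))

namespace LCSAux

lemma le_foldr_max {a : ℕ} {l : List ℕ} (h : a ∈ l) : a ≤ l.foldr max 0 := by
  induction l with
  | nil => simp at h
  | cons b t ih =>
    simp only [List.foldr_cons]
    rcases List.mem_cons.1 h with h | h
    · exact h ▸ le_max_left _ _
    · exact le_trans (ih h) (le_max_right _ _)

lemma foldr_max_mem {l : List ℕ} (h : l ≠ []) : l.foldr max 0 ∈ l := by
  induction l with
  | nil => simp at h
  | cons b t ih =>
    rcases eq_or_ne t [] with rfl | ht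
    · simp
    · simp only [List.foldr_cons]
      rcases le_total (t.foldr max 0) b with h1 | h1
      · simp [max_eq_left h1]
      · rw [max_eq_right h1]; exact List.mem_cons_of_mem _ (ih ht)

variable {α : Type*} [DecidableEq α]

lemma length_le_LCS {s x y : List α} (hx : s.Sublist x) (hy : s.Sublist y) :
    s.length ≤ LCS x y := by
  apply le_foldr_max
  simp only [List.mem_map]
  exact ⟨s, by simp [List.mem_filter, List.mem_sublists, hx, hy], rfl⟩

lemma exists_LCS_witness (x y : List α) :
    ∃ s : List α, s.Sublist x ∧ s.Sublist y ∧ s.length = LCS x y := by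
  have hne : (x.sublists.filter (fun s => decide (s.Sublist y))).map List.length ≠ [] := by
    simp only [ne_eq, List.map_eq_nil_iff, List.filter_eq_nil_iff, not_forall]
    exact ⟨[], by simp [List.mem_sublists]⟩
  have := foldr_max_mem hne
  rw [List.mem_map] at this
  obtain ⟨s, hs, hlen⟩ := this
  rw [List.mem_filter, List.mem_sublists] at hs
  exact ⟨s, hs.1, by simpa using hs.2, hlen⟩

lemma LCS_le_length_left (x y : List α) : LCS x y ≤ x.length := by
  obtain ⟨s, hx, _, hl⟩ := exists_LCS_witness x y
  exact hl ▸ hx.length_le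

lemma LCS_le_length_right (x y : List α) : LCS x y ≤ y.length := by
  obtain ⟨s, _, hy, hl⟩ := exists_LCS_witness x y
  exact hl ▸ hy.length_le

lemma LCS_superadd (x1 x2 y1 y2 : List α) :
    LCS x1 y1 + LCS x2 y2 ≤ LCS (x1 ++ x2) (y1 ++ y2) := by
  obtain ⟨s1, ha1, hb1, hl1⟩ := exists_LCS_witness x1 y1
  obtain ⟨s2, ha2, hb2, hl2⟩ := exists_LCS_witness x2 y2
  have := length_le_LCS (ha1.append ha2) (hb1.append hb2)
  simpa [hl1, hl2] using this

lemma LCS_prefix_bound (p q u v : List α) :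
    LCS (p ++ u) (q ++ v) ≤ p.length + q.length + LCS u v := by
  obtain ⟨s, hx, hy, hl⟩ := exists_LCS_witness (p ++ u) (q ++ v)
  rw [← hl]
  rw [List.sublist_append_iff] at hx
  obtain ⟨s1, s2, rfl, hs1, hs2⟩ := hx
  have hy2 : s2.Sublist (q ++ v) := (List.sublist_append_right s1 s2).trans hy
  rw [List.sublist_append_iff] at hy2
  obtain ⟨t1, t2, hs2eq, ht1, ht2⟩ := hy2
  have ht2u : t2.Sublist u := by
    have : t2.Sublist s2 := hs2eq ▸ List.sublist_append_right t1 t2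
    exact this.trans hs2
  have h2 : t2.length ≤ LCS u v := length_le_LCS ht2u ht2
  have := hs1.length_le
  have := ht1.length_le
  have hlen2 : s2.length = t1.length + t2.length := by rw [hs2eq, List.length_append]
  simp only [List.length_append]
  omega

lemma LCS_one_le {a : α} {x y : List α} (hx : a ∈ x) (hy : a ∈ y) : 1 ≤ LCS x y := by
  have := length_le_LCS (List.singleton_sublist.2 hx) (List.singleton_sublist.2 hy)
  simpa using this

end LCSAux

section COMB
variable {S A : Type*} [Fintype S] [DecidableEq S] [Fintype A] [DecidableEq A]

variable (P : S → S → ℝ) (e : S → A → A → ℝ)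

/-- weight of a trajectory of length n+1 -/
def wt (n : ℕ) (v : Fin (n+1) → S × A × A) : ℝ :=
  (∏ t, e (v t).1 (v t).2.1 (v t).2.2) * ∏ t : Fin n, P (v t.castSucc).1 (v t.succ).1

def xl {n : ℕ} (v : Fin n → S × A × A) : List A := List.ofFn (fun t => (v t).2.1)
def yl {n : ℕ} (v : Fin n → S × A × A) : List A := List.ofFn (fun t => (v t).2.2)

/-- expected LCS of a block of length n+1 started in state s -/
def Fc (n : ℕ) (s : S) : ℝ :=
  ∑ v : Fin (n+1) → S × A × A,
    if (v 0).1 = s then (LCS (xl v) (yl v) : ℝ) * wt P e n v else 0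

variable {P e}
variable (hProw : ∀ s, ∑ s', P s s' = 1) (hPnn : ∀ s s', 0 ≤ P s s')
variable (herow : ∀ s, ∑ x, ∑ y, e s x y = 1) (henn : ∀ s x y, 0 ≤ e s x y)

include hPnn henn in
lemma wt_nonneg (n : ℕ) (v : Fin (n+1) → S × A × A) : 0 ≤ wt P e n v :=
  mul_nonneg (Finset.prod_nonneg fun t _ => henn _ _ _)
    (Finset.prod_nonneg fun t _ => hPnn _ _)

lemma sum_cons {β : Type*} [Fintype β] {n : ℕ} (g : (Fin (n+1) → β) → ℝ) :
    ∑ v : Fin (n+1) → β, g v = ∑ c : β, ∑ u : Fin n → β, g (Fin.cons c u) := by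
  have h1 : ∑ v : Fin (n+1) → β, g v = ∑ p : β × (Fin n → β), g (Fin.cons p.1 p.2) :=
    (Fintype.sum_equiv (Fin.consEquiv (fun _ : Fin (n+1) => β))
      (fun p => g (Fin.cons p.1 p.2)) g (fun p => rfl)).symm
  rw [h1, Fintype.sum_prod_type]

lemma sum_head (s : S) (h : S → A → A → ℝ) :
    ∑ c : S × A × A, (if c.1 = s then h c.1 c.2.1 c.2.2 else 0) = ∑ x, ∑ y, h s x y := by
  rw [Fintype.sum_prod_type]
  have key : ∀ z : S, (∑ p : A × A, if (z, p).1 = s then h (z,p).1 (z,p).2.1 (z,p).2.2 else 0)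
      = if z = s then ∑ x, ∑ y, h s x y else 0 := by
    intro z
    by_cases hz : z = s
    · subst hz; simp [Fintype.sum_prod_type]
    · simp [hz]
  rw [Finset.sum_congr rfl (fun z _ => key z)]
  simp [Finset.sum_ite_eq']

lemma wt_cons (n : ℕ) (c : S × A × A) (u : Fin (n+1) → S × A × A) :
    wt P e (n+1) (Fin.cons c u) = e c.1 c.2.1 c.2.2 * P c.1 (u 0).1 * wt P e n u := by
  unfold wt
  rw [Fin.prod_univ_succ (fun t : Fin (n+2) =>
        e ((Fin.cons c u : Fin (n+2) → S × A × A) t).1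
          ((Fin.cons c u : Fin (n+2) → S × A × A) t).2.1
          ((Fin.cons c u : Fin (n+2) → S × A × A) t).2.2),
      Fin.prod_univ_succ (fun t : Fin (n+1) =>
        P ((Fin.cons c u : Fin (n+2) → S × A × A) t.castSucc).1
          ((Fin.cons c u : Fin (n+2) → S × A × A) t.succ).1)]
  simp only [Fin.cons_zero, Fin.cons_succ, Fin.castSucc_zero, Fin.succ_castSucc]
  simp only [← Fin.succ_castSucc, Fin.cons_succ]
  ring

lemma xl_cons (n : ℕ) (c : S × A × A) (u : Fin n → S × A × A) :
    xl (Fin.cons c u : Fin (n+1) → S × A × A) = c.2.1 :: xl u := by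
  simp [xl, List.ofFn_succ]

lemma yl_cons (n : ℕ) (c : S × A × A) (u : Fin n → S × A × A) :
    yl (Fin.cons c u : Fin (n+1) → S × A × A) = c.2.2 :: yl u := by
  simp [yl, List.ofFn_succ]

include hProw herow in
lemma wt_sum_one : ∀ (n : ℕ) (s : S),
    (∑ v : Fin (n+1) → S × A × A, if (v 0).1 = s then wt P e n v else 0) = 1 := by
  intro n
  induction n with
  | zero =>
    intro s
    rw [sum_cons (fun v => if (v 0).1 = s then wt P e 0 v else 0)]
    have key : ∀ c : S × A × A, (∑ u : Fin 0 → S × A × A,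
        if ((Fin.cons c u : Fin 1 → S × A × A) 0).1 = s then wt P e 0 (Fin.cons c u) else 0)
        = if c.1 = s then e c.1 c.2.1 c.2.2 else 0 := by
      intro c
      rw [Fintype.sum_unique]
      simp [wt]
    rw [Finset.sum_congr rfl (fun c _ => key c), sum_head s, herow s]
  | succ n IH =>
    intro s
    rw [sum_cons (fun v => if (v 0).1 = s then wt P e (n+1) v else 0)]
    have step : ∀ c : S × A × A, (∑ u : Fin (n+1) → S × A × A,
        if ((Fin.cons c u : Fin (n+2) → S × A × A) 0).1 = s then wt P e (n+1) (Fin.cons c u) else 0)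
        = if c.1 = s then e c.1 c.2.1 c.2.2 else 0 := by
      intro c
      simp only [Fin.cons_zero, wt_cons]
      by_cases hc : c.1 = s
      · subst hc
        simp only [eq_self_iff_true, if_true]
        have expand : ∀ u : Fin (n+1) → S × A × A,
            e c.1 c.2.1 c.2.2 * P c.1 (u 0).1 * wt P e n u
            = e c.1 c.2.1 c.2.2 * ∑ s' : S,
                P c.1 s' * (if (u 0).1 = s' then wt P e n u else 0) := by
          intro u
          have h0 : ∀ s' : S, P c.1 s' * (if (u 0).1 = s' then wt P e n u else 0)
              = if (u 0).1 = s' then P c.1 s' * wt P e n u else 0 := fun s' => by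
            split <;> simp
          rw [Finset.sum_congr rfl fun s' _ => h0 s',
            Finset.sum_ite_eq Finset.univ ((u 0).1) (fun s' => P c.1 s' * wt P e n u)]
          simp [mul_assoc]
        rw [Finset.sum_congr rfl fun u _ => expand u, ← Finset.mul_sum]
        rw [Finset.sum_comm]
        have inner : ∀ s' : S, (∑ u : Fin (n+1) → S × A × A,
            P c.1 s' * (if (u 0).1 = s' then wt P e n u else 0)) = P c.1 s' := by
          intro s'
          rw [← Finset.mul_sum, IH s', mul_one]
        rw [Finset.sum_congr rfl fun s' _ => inner s', hProw c.1, mul_one]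
      · simp [hc]
    rw [Finset.sum_congr rfl (fun c _ => step c), sum_head s, herow s]

end COMB
section S4
variable {S A : Type*} [Fintype S] [DecidableEq S] [Fintype A] [DecidableEq A]
variable {P : S → S → ℝ} {e : S → A → A → ℝ}
variable (hProw : ∀ s, ∑ s', P s s' = 1) (hPnn : ∀ s s', 0 ≤ P s s')
variable (herow : ∀ s, ∑ x, ∑ y, e s x y = 1) (henn : ∀ s x y, 0 ≤ e s x y)

open LCSAux

lemma LCS_cons_lower {α : Type*} [DecidableEq α] (a b : α) (u v : List α) :
    LCS u v ≤ LCS (a :: u) (b :: v) := by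
  obtain ⟨s, hu, hv, hl⟩ := exists_LCS_witness u v
  rw [← hl]
  exact length_le_LCS (hu.trans (List.sublist_cons_self a u))
    (hv.trans (List.sublist_cons_self b v))

lemma LCS_cons_upper {α : Type*} [DecidableEq α] (a b : α) (u v : List α) :
    LCS (a :: u) (b :: v) ≤ 2 + LCS u v := by
  have := LCS_prefix_bound [a] [b] u v
  simpa using this

include hPnn henn in
lemma Fc_nonneg (n : ℕ) (s : S) : 0 ≤ Fc P e n s := by
  apply Finset.sum_nonneg
  intro v _
  split
  · exact mul_nonneg (Nat.cast_nonneg _) (wt_nonneg hPnn henn n v)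
  · exact le_refl 0

lemma xl_length (n : ℕ) (v : Fin n → S × A × A) : (xl v).length = n := by simp [xl]

include hProw hPnn herow henn in
lemma Fc_le (n : ℕ) (s : S) : Fc P e n s ≤ n + 1 := by
  have h1 : Fc P e n s ≤ ∑ v : Fin (n+1) → S × A × A,
      if (v 0).1 = s then ((n : ℝ) + 1) * wt P e n v else 0 := by
    apply Finset.sum_le_sum
    intro v _
    split
    · apply mul_le_mul_of_nonneg_right _ (wt_nonneg hPnn henn n v)
      have := LCS_le_length_left (xl v) (yl v)
      rw [xl_length] at this
      exact_mod_cast this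
    · exact le_refl 0
  calc Fc P e n s ≤ _ := h1
    _ = ((n:ℝ)+1) * ∑ v : Fin (n+1) → S × A × A, if (v 0).1 = s then wt P e n v else 0 := by
        rw [Finset.mul_sum]
        exact Finset.sum_congr rfl fun v _ => by split <;> simp
    _ = (n:ℝ) + 1 := by rw [wt_sum_one hProw herow n s, mul_one]

/-- collapse a sum over trajectories by the initial state -/
lemma sum_fiber {n : ℕ} (h : S → (Fin (n+1) → S × A × A) → ℝ) :
    ∑ u : Fin (n+1) → S × A × A, h (u 0).1 u
      = ∑ s' : S, ∑ u : Fin (n+1) → S × A × A, if (u 0).1 = s' then h s' u else 0 := by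
  rw [Finset.sum_comm]
  apply Finset.sum_congr rfl
  intro u _
  have h0 : ∀ s' : S, (if (u 0).1 = s' then h s' u else 0)
      = if (u 0).1 = s' then h ((u 0).1) u else 0 := fun s' => by
    split
    · next hcond => rw [hcond]
    · rfl
  rw [Finset.sum_congr rfl fun s' _ => h0 s',
    Finset.sum_ite_eq Finset.univ ((u 0).1) (fun _ => h ((u 0).1) u)]
  simp

include hProw herow in
lemma sum_P_wt (n : ℕ) (s : S) :
    ∑ u : Fin (n+1) → S × A × A, P s (u 0).1 * wt P e n u = 1 := by
  rw [sum_fiber (fun t u => P s t * wt P e n u)]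
  have h1 : ∀ s' : S, (∑ u : Fin (n+1) → S × A × A,
      if (u 0).1 = s' then P s s' * wt P e n u else 0) = P s s' := by
    intro s'
    have h0 : ∀ u : Fin (n+1) → S × A × A, (if (u 0).1 = s' then P s s' * wt P e n u else 0)
        = P s s' * (if (u 0).1 = s' then wt P e n u else 0) := fun u => by split <;> simp
    rw [Finset.sum_congr rfl fun u _ => h0 u, ← Finset.mul_sum, wt_sum_one hProw herow n s',
      mul_one]
  rw [Finset.sum_congr rfl fun s' _ => h1 s', hProw s]

include hProw herow in
lemma master_sum (n : ℕ) (s : S) (φ : (Fin (n+1) → S × A × A) → ℝ) :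
    (∑ c : S × A × A, ∑ u : Fin (n+1) → S × A × A,
      if c.1 = s then φ u * (e c.1 c.2.1 c.2.2 * P c.1 (u 0).1 * wt P e n u) else 0)
    = ∑ u : Fin (n+1) → S × A × A, P s (u 0).1 * (φ u * wt P e n u) := by
  have h1 : ∀ c : S × A × A, ∀ u : Fin (n+1) → S × A × A,
      (if c.1 = s then φ u * (e c.1 c.2.1 c.2.2 * P c.1 (u 0).1 * wt P e n u) else 0)
      = (if c.1 = s then e c.1 c.2.1 c.2.2
          * (P s (u 0).1 * (φ u * wt P e n u)) else 0) := by
    intro c u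
    split
    · next h => rw [h]; ring
    · rfl
  rw [Finset.sum_congr rfl fun c _ => Finset.sum_congr rfl fun u _ => h1 c u]
  have h2 : ∀ c : S × A × A, (∑ u : Fin (n+1) → S × A × A,
      if c.1 = s then e c.1 c.2.1 c.2.2 * (P s (u 0).1 * (φ u * wt P e n u)) else 0)
      = if c.1 = s then e c.1 c.2.1 c.2.2
          * (∑ u : Fin (n+1) → S × A × A, P s (u 0).1 * (φ u * wt P e n u)) else 0 := by
    intro c
    split
    · rw [Finset.mul_sum]
    · exact Finset.sum_const_zero
  rw [Finset.sum_congr rfl fun c _ => h2 c,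
    sum_head s (fun z x y => e z x y
      * (∑ u : Fin (n+1) → S × A × A, P s (u 0).1 * (φ u * wt P e n u)))]
  rw [show (∑ x, ∑ y, e s x y * (∑ u : Fin (n+1) → S × A × A, P s (u 0).1 * (φ u * wt P e n u)))
      = (∑ x, ∑ y, e s x y) * (∑ u : Fin (n+1) → S × A × A, P s (u 0).1 * (φ u * wt P e n u)) by
    rw [Finset.sum_mul]
    exact Finset.sum_congr rfl fun x _ => by rw [Finset.sum_mul]]
  rw [herow s, one_mul]

include hProw hPnn herow henn in
lemma Fc_step (n : ℕ) (s : S) :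
    (∑ s', P s s' * Fc P e n s') ≤ Fc P e (n+1) s ∧
      Fc P e (n+1) s ≤ 2 + ∑ s', P s s' * Fc P e n s' := by
  have hK : (∑ s', P s s' * Fc P e n s')
      = ∑ u : Fin (n+1) → S × A × A, P s (u 0).1 * ((LCS (xl u) (yl u) : ℝ) * wt P e n u) := by
    rw [sum_fiber (fun t u => P s t * ((LCS (xl u) (yl u) : ℝ) * wt P e n u))]
    apply Finset.sum_congr rfl
    intro s' _
    have h0 : ∀ u : Fin (n+1) → S × A × A,
        (if (u 0).1 = s' then P s s' * ((LCS (xl u) (yl u) : ℝ) * wt P e n u) else 0)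
        = P s s' * (if (u 0).1 = s' then (LCS (xl u) (yl u) : ℝ) * wt P e n u else 0) :=
      fun u => by split <;> simp
    rw [Finset.sum_congr rfl fun u _ => h0 u, ← Finset.mul_sum]
    rfl
  have hkey : Fc P e (n+1) s = ∑ c : S × A × A, ∑ u : Fin (n+1) → S × A × A,
      if c.1 = s then (LCS (c.2.1 :: xl u) (c.2.2 :: yl u) : ℝ)
        * (e c.1 c.2.1 c.2.2 * P c.1 (u 0).1 * wt P e n u) else 0 := by
    unfold Fc
    rw [sum_cons (fun v => if (v 0).1 = s
      then (LCS (xl v) (yl v) : ℝ) * wt P e (n+1) v else 0)]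
    apply Finset.sum_congr rfl
    intro c _
    apply Finset.sum_congr rfl
    intro u _
    rw [Fin.cons_zero, wt_cons, xl_cons, yl_cons]
  have coef_nonneg : ∀ (c : S × A × A) (u : Fin (n+1) → S × A × A),
      0 ≤ e c.1 c.2.1 c.2.2 * P c.1 (u 0).1 * wt P e n u :=
    fun c u => mul_nonneg (mul_nonneg (henn _ _ _) (hPnn _ _)) (wt_nonneg hPnn henn n u)
  constructor
  · rw [hK, ← master_sum hProw herow n s (fun u => (LCS (xl u) (yl u) : ℝ)), hkey]
    apply Finset.sum_le_sum
    intro c _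
    apply Finset.sum_le_sum
    intro u _
    split
    · apply mul_le_mul_of_nonneg_right _ (coef_nonneg c u)
      exact_mod_cast LCS_cons_lower c.2.1 c.2.2 (xl u) (yl u)
    · exact le_refl 0
  · rw [hK, hkey]
    have step1 : (∑ c : S × A × A, ∑ u : Fin (n+1) → S × A × A,
        if c.1 = s then (LCS (c.2.1 :: xl u) (c.2.2 :: yl u) : ℝ)
          * (e c.1 c.2.1 c.2.2 * P c.1 (u 0).1 * wt P e n u) else 0)
        ≤ ∑ c : S × A × A, ∑ u : Fin (n+1) → S × A × A,
        if c.1 = s then (2 + (LCS (xl u) (yl u) : ℝ))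
          * (e c.1 c.2.1 c.2.2 * P c.1 (u 0).1 * wt P e n u) else 0 := by
      apply Finset.sum_le_sum
      intro c _
      apply Finset.sum_le_sum
      intro u _
      split
      · apply mul_le_mul_of_nonneg_right _ (coef_nonneg c u)
        have := LCS_cons_upper c.2.1 c.2.2 (xl u) (yl u)
        push_cast
        exact_mod_cast this
      · exact le_refl 0
    refine le_trans step1 ?_
    rw [master_sum hProw herow n s (fun u => 2 + (LCS (xl u) (yl u) : ℝ))]
    have expand : ∀ u : Fin (n+1) → S × A × A,
        P s (u 0).1 * ((2 + (LCS (xl u) (yl u) : ℝ)) * wt P e n u)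
        = 2 * (P s (u 0).1 * wt P e n u)
          + P s (u 0).1 * ((LCS (xl u) (yl u) : ℝ) * wt P e n u) := fun u => by ring
    rw [Finset.sum_congr rfl fun u _ => expand u, Finset.sum_add_distrib, ← Finset.mul_sum,
      sum_P_wt hProw herow n s, mul_one]

end S4
section S5
variable {S A : Type*} [Fintype S] [DecidableEq S] [Fintype A] [DecidableEq A]
variable {P : S → S → ℝ} {e : S → A → A → ℝ}
variable (hProw : ∀ s, ∑ s', P s s' = 1) (hPnn : ∀ s s', 0 ≤ P s s')
variable (herow : ∀ s, ∑ x, ∑ y, e s x y = 1) (henn : ∀ s x y, 0 ≤ e s x y)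

include hProw in
lemma Pk_row : ∀ (k : ℕ) (s : S), ∑ s', ((Matrix.of P)^k) s s' = 1 := by
  intro k
  induction k with
  | zero => intro s; simp [Matrix.one_apply]
  | succ k IH =>
    intro s
    rw [pow_succ]
    simp only [Matrix.mul_apply]
    rw [Finset.sum_comm]
    have h1 : ∀ j : S, ∑ s', ((Matrix.of P)^k) s j * (Matrix.of P) j s'
        = ((Matrix.of P)^k) s j := by
      intro j
      rw [← Finset.mul_sum]
      have : ∑ s', (Matrix.of P) j s' = 1 := hProw j
      rw [this, mul_one]
    rw [Finset.sum_congr rfl fun j _ => h1 j, IH s]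

include hPnn in
lemma Pk_nonneg : ∀ (k : ℕ) (s s' : S), 0 ≤ ((Matrix.of P)^k) s s' := by
  intro k
  induction k with
  | zero => intro s s'; rw [pow_zero]; rw [Matrix.one_apply]; split <;> norm_num
  | succ k IH =>
    intro s s'
    rw [pow_succ, Matrix.mul_apply]
    exact Finset.sum_nonneg fun j _ => mul_nonneg (IH s j) (hPnn j s')

include hProw hPnn herow henn in
lemma Fc_kstep : ∀ (k n : ℕ) (s : S),
    (∑ s', ((Matrix.of P)^k) s s' * Fc P e n s') ≤ Fc P e (n+k) s ∧
      Fc P e (n+k) s ≤ 2*k + ∑ s', ((Matrix.of P)^k) s s' * Fc P e n s' := by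
  intro k
  induction k with
  | zero =>
    intro n s
    simp only [pow_zero, Matrix.one_apply, ite_mul, one_mul, zero_mul, Nat.add_zero]
    rw [Finset.sum_ite_eq Finset.univ s (fun s' => Fc P e n s')]
    simp
  | succ k IH =>
    intro n s
    have hterm : ∀ t : S, ((Matrix.of P)^(k+1)) s t * Fc P e n t
        = ∑ s', P s s' * (((Matrix.of P)^k) s' t * Fc P e n t) := by
      intro t
      rw [pow_succ', Matrix.mul_apply, Finset.sum_mul]
      apply Finset.sum_congr rfl
      intro s' _
      show Matrix.of P s s' * ((Matrix.of P)^k) s' t * Fc P e n t = _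
      simp only [Matrix.of_apply]
      ring
    have hswap : (∑ s', P s s' * ∑ t, ((Matrix.of P)^k) s' t * Fc P e n t)
        = ∑ t, ((Matrix.of P)^(k+1)) s t * Fc P e n t := by
      rw [Finset.sum_congr rfl fun t (_ : t ∈ Finset.univ) => hterm t, Finset.sum_comm]
      apply Finset.sum_congr rfl
      intro s' _
      rw [Finset.mul_sum]
    have hstep := Fc_step hProw hPnn herow henn (n+k) s
    have hna : n + (k+1) = (n+k) + 1 := by omega
    rw [hna]
    constructor
    · refine le_trans ?_ hstep.1
      rw [← hswap]
      apply Finset.sum_le_sum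
      intro s' _
      exact mul_le_mul_of_nonneg_left (IH n s').1 (hPnn s s')
    · refine le_trans hstep.2 ?_
      have h2 : (∑ s', P s s' * Fc P e (n+k) s')
          ≤ ∑ s', P s s' * (2*k + ∑ t, ((Matrix.of P)^k) s' t * Fc P e n t) := by
        apply Finset.sum_le_sum
        intro s' _
        exact mul_le_mul_of_nonneg_left (IH n s').2 (hPnn s s')
      have h3 : (∑ s', P s s' * (2*(k:ℝ) + ∑ t, ((Matrix.of P)^k) s' t * Fc P e n t))
          = 2*k + ∑ t, ((Matrix.of P)^(k+1)) s t * Fc P e n t := by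
        rw [Finset.sum_congr rfl fun s' (_ : s' ∈ Finset.univ) => mul_add (P s s') _ _,
          Finset.sum_add_distrib, ← Finset.sum_mul, hProw s, one_mul, hswap]
      push_cast
      push_cast at h3
      linarith [h2, h3]

end S5
section S6
variable {S A : Type*} [Fintype S] [DecidableEq S] [Fintype A] [DecidableEq A] [Nonempty S]
variable {P : S → S → ℝ} {e : S → A → A → ℝ}
variable (hProw : ∀ s, ∑ s', P s s' = 1) (hPnn : ∀ s s', 0 ≤ P s s')
variable (herow : ∀ s, ∑ x, ∑ y, e s x y = 1) (henn : ∀ s x y, 0 ≤ e s x y)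

lemma mix_bound {ε C' : ℝ} (p q f : S → ℝ)
    (hp : ∀ t, ε ≤ p t) (hq : ∀ t, ε ≤ q t)
    (hps : ∑ t, p t = 1) (hqs : ∑ t, q t = 1)
    (hfpair : ∀ t t', f t - f t' ≤ C') :
    ∑ t, (p t - q t) * f t ≤ (1 - ε * Fintype.card S) * C' := by
  obtain ⟨t0, -, ht0⟩ := Finset.exists_min_image Finset.univ f
    ⟨Classical.arbitrary S, Finset.mem_univ _⟩
  have hrw : ∑ t, (p t - q t) * f t = ∑ t, (p t - q t) * (f t - f t0) := by
    have : ∀ t : S, (p t - q t) * (f t - f t0) = (p t - q t) * f t - (p t - q t) * f t0 :=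
      fun t => by ring
    rw [Finset.sum_congr rfl fun t _ => this t, Finset.sum_sub_distrib, ← Finset.sum_mul,
      Finset.sum_sub_distrib, hps, hqs, sub_self, zero_mul, sub_zero]
  rw [hrw]
  have hterm : ∀ t : S, (p t - q t) * (f t - f t0) ≤ (p t - ε) * C' := by
    intro t
    have h1 : p t - q t ≤ p t - ε := by linarith [hq t]
    have h2 : 0 ≤ f t - f t0 := by linarith [ht0 t (Finset.mem_univ t)]
    have h3 : f t - f t0 ≤ C' := hfpair t t0
    have h4 : 0 ≤ p t - ε := by linarith [hp t]
    calc (p t - q t) * (f t - f t0) ≤ (p t - ε) * (f t - f t0) :=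
          mul_le_mul_of_nonneg_right h1 h2
      _ ≤ (p t - ε) * C' := mul_le_mul_of_nonneg_left h3 h4
  calc ∑ t, (p t - q t) * (f t - f t0) ≤ ∑ t, (p t - ε) * C' :=
        Finset.sum_le_sum fun t _ => hterm t
    _ = (1 - ε * Fintype.card S) * C' := by
        rw [← Finset.sum_mul, Finset.sum_sub_distrib, hps, Finset.sum_const,
          Finset.card_univ, nsmul_eq_mul]
        ring

include hProw hPnn herow henn in
lemma Fc_osc {k : ℕ} (hk : 1 ≤ k) {ε : ℝ} (hε : 0 < ε)
    (hεk : ∀ s s', ε ≤ ((Matrix.of P)^k) s s') :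
    ∀ (n : ℕ) (s s' : S), Fc P e n s - Fc P e n s' ≤ 3*k / (ε * Fintype.card S) := by
  have hcard : (0:ℝ) < Fintype.card S := by
    have := Fintype.card_pos_iff.2 ‹Nonempty S›
    exact_mod_cast this
  have hεS : 0 < ε * Fintype.card S := mul_pos hε hcard
  have hεS1 : ε * Fintype.card S ≤ 1 := by
    have s0 := Classical.arbitrary S
    have h1 := Pk_row hProw k s0
    have h2 : (Fintype.card S : ℝ) * ε ≤ ∑ s', ((Matrix.of P)^k) s0 s' := by
      rw [← Finset.card_univ, ← nsmul_eq_mul]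
      rw [← Finset.sum_const]
      exact Finset.sum_le_sum fun t _ => hεk s0 t
    rw [h1] at h2
    linarith [h2]
  set C : ℝ := 3*k / (ε * Fintype.card S) with hC
  have hkC : (k:ℝ) ≤ C := by
    rw [hC]
    rw [le_div_iff₀ hεS]
    have hk1 : (1:ℝ) ≤ (k:ℝ) := by exact_mod_cast hk
    nlinarith
  have hεSC : (ε * Fintype.card S) * C = 3*k := by
    rw [hC]
    field_simp
  intro n
  induction n using Nat.strong_induction_on with
  | _ n IH =>
    intro s s'
    by_cases hn : n < k
    · have h1 := Fc_le hProw hPnn herow henn n s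
      have h2 := Fc_nonneg hPnn henn (P := P) (e := e) n s'
      have : (n:ℝ) + 1 ≤ (k:ℝ) := by exact_mod_cast hn
      linarith
    · push_neg at hn
      set m := n - k with hm
      have hmn : m + k = n := by omega
      have hmlt : m < n := by omega
      have hupper := (Fc_kstep hProw hPnn herow henn k m s).2
      have hlower := (Fc_kstep hProw hPnn herow henn k m s').1
      rw [hmn] at hupper hlower
      have hmix := mix_bound (fun t => ((Matrix.of P)^k) s t) (fun t => ((Matrix.of P)^k) s' t)
        (fun t => Fc P e m t) (hεk s) (hεk s') (Pk_row hProw k s) (Pk_row hProw k s')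
        (fun t t' => IH m hmlt t t')
      have hsub : (∑ t, ((Matrix.of P)^k) s t * Fc P e m t)
          - (∑ t, ((Matrix.of P)^k) s' t * Fc P e m t)
          = ∑ t, (((Matrix.of P)^k) s t - ((Matrix.of P)^k) s' t) * Fc P e m t := by
        rw [← Finset.sum_sub_distrib]
        exact Finset.sum_congr rfl fun t _ => by ring
      have hkR : (0:ℝ) ≤ k := Nat.cast_nonneg k
      have hCbound : (1 - ε * Fintype.card S) * C ≤ C - 3*k := by nlinarith [hεSC]
      linarith [hupper, hlower, hmix, hsub ▸ hmix]
end S6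

section CYL
variable {Ω S A : Type*} [MeasurableSpace Ω]
    [Fintype S] [DecidableEq S] [MeasurableSpace S] [MeasurableSingletonClass S]
    [Fintype A] [DecidableEq A] [MeasurableSpace A] [MeasurableSingletonClass A]
    (ℙ : Measure Ω) [IsProbabilityMeasure ℙ]
    (Z : ℕ → Ω → S) (X Y : ℕ → Ω → A)

/-- the cylinder event pinning the full triple at times m+1, ..., m+n+1 -/
def cylEvent (m n : ℕ) (v : Fin (n+1) → S × A × A) : Set Ω :=
  {ω | ∀ t : Fin (n+1), (Z (m+1+t) ω, X (m+1+t) ω, Y (m+1+t) ω) = v t}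

variable (P : S → S → ℝ) (e : S → A → A → ℝ)

theorem cyl_prob
    (hmarkov : ∀ (n : ℕ) (z z' : S) (B : Set (Fin (n + 1) → S × A × A)),
      ℙ ({ω | Z (n + 2) ω = z'} ∩ ({ω | Z (n + 1) ω = z} ∩
          {ω | (fun i : Fin (n + 1) => (Z (↑i + 1) ω, X (↑i + 1) ω, Y (↑i + 1) ω)) ∈ B}))
        = ENNReal.ofReal (P z z') *
          ℙ ({ω | Z (n + 1) ω = z} ∩
            {ω | (fun i : Fin (n + 1) => (Z (↑i + 1) ω, X (↑i + 1) ω, Y (↑i + 1) ω)) ∈ B}))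
    (hemit : ∀ (n : ℕ) (x y : A) (z : S) (B : Set (Fin n → S × A × A)),
      ℙ ({ω | X (n + 1) ω = x ∧ Y (n + 1) ω = y} ∩ ({ω | Z (n + 1) ω = z} ∩
          {ω | (fun i : Fin n => (Z (↑i + 1) ω, X (↑i + 1) ω, Y (↑i + 1) ω)) ∈ B}))
        = ENNReal.ofReal (e z x y) *
          ℙ ({ω | Z (n + 1) ω = z} ∩
            {ω | (fun i : Fin n => (Z (↑i + 1) ω, X (↑i + 1) ω, Y (↑i + 1) ω)) ∈ B})) :
    ∀ (n m : ℕ) (v : Fin (n+1) → S × A × A),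
      ℙ (cylEvent Z X Y m n v)
        = ℙ {ω | Z (m+1) ω = (v 0).1}
          * (∏ t, ENNReal.ofReal (e (v t).1 (v t).2.1 (v t).2.2))
          * ∏ t : Fin n, ENNReal.ofReal (P (v t.castSucc).1 (v t.succ).1) := by
  intro n
  induction n with
  | zero =>
    intro m v
    have hset : cylEvent Z X Y m 0 v =
        {ω | X (m+1) ω = (v 0).2.1 ∧ Y (m+1) ω = (v 0).2.2} ∩ ({ω | Z (m+1) ω = (v 0).1} ∩
          {ω | (fun i : Fin m => (Z (↑i + 1) ω, X (↑i + 1) ω, Y (↑i + 1) ω)) ∈ Set.univ}) := by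
      ext ω
      simp only [cylEvent, Set.mem_setOf_eq, Set.mem_inter_iff, Set.mem_univ, and_true,
        Prod.ext_iff]
      constructor
      · intro h
        have := h 0
        simp only [Fin.val_zero, Nat.add_zero] at this
        exact ⟨⟨this.2.1, this.2.2⟩, this.1⟩
      · intro h t
        have ht : t = 0 := Fin.eq_zero t
        subst ht
        simp only [Fin.val_zero, Nat.add_zero]
        exact ⟨h.2, h.1.1, h.1.2⟩
    rw [hset, hemit m (v 0).2.1 (v 0).2.2 (v 0).1 Set.univ]
    have : {ω : Ω | (fun i : Fin m => (Z (↑i + 1) ω, X (↑i + 1) ω, Y (↑i + 1) ω)) ∈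
        (Set.univ : Set (Fin m → S × A × A))} = Set.univ := by ext ω; simp
    rw [this, Set.inter_univ]
    simp [Finset.prod_const, mul_comm]
  | succ n IH =>
    intro m v
    set B1 : Set (Fin (m+n+1) → S × A × A) :=
      {f | ∀ t : Fin (n+1), f ⟨m + t, by omega⟩ = v t.castSucc} with hB1
    have hhist : {ω : Ω | (fun i : Fin (m+n+1) => (Z (↑i + 1) ω, X (↑i + 1) ω, Y (↑i + 1) ω)) ∈ B1}
        = cylEvent Z X Y m n (fun t => v t.castSucc) := by
      ext ω
      simp only [hB1, Set.mem_setOf_eq, cylEvent]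
      constructor
      · intro h t
        have := h t
        simpa [Nat.add_right_comm m (t:ℕ) 1, Nat.add_assoc] using this
      · intro h t
        have := h t
        simpa [Nat.add_right_comm m (t:ℕ) 1, Nat.add_assoc] using this
    have hZsub : {ω : Ω | (fun i : Fin (m+n+1) => (Z (↑i + 1) ω, X (↑i + 1) ω, Y (↑i + 1) ω)) ∈ B1}
        = {ω | Z (m+n+1) ω = (v ((Fin.last n).castSucc)).1} ∩
          {ω : Ω | (fun i : Fin (m+n+1) => (Z (↑i + 1) ω, X (↑i + 1) ω, Y (↑i + 1) ω)) ∈ B1} := by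
      apply Set.eq_of_subset_of_subset
      · intro ω h
        refine ⟨?_, h⟩
        have h2 := congrArg Prod.fst (h (Fin.last n))
        simp only [Fin.val_last] at h2
        simpa [Nat.add_right_comm m n 1] using h2
      · exact fun ω h => h.2
    have hset : cylEvent Z X Y m (n+1) v =
        {ω | X (m+n+2) ω = (v (Fin.last (n+1))).2.1 ∧ Y (m+n+2) ω = (v (Fin.last (n+1))).2.2} ∩
          ({ω | Z (m+n+2) ω = (v (Fin.last (n+1))).1} ∩
            {ω : Ω | (fun i : Fin (m+n+1) => (Z (↑i + 1) ω, X (↑i + 1) ω, Y (↑i + 1) ω)) ∈ B1}) := by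
      ext ω
      simp only [cylEvent, Set.mem_setOf_eq, Set.mem_inter_iff, hB1]
      constructor
      · intro h
        have hlast := h (Fin.last (n+1))
        rw [show m + 1 + ((Fin.last (n+1) : Fin (n+2)) : ℕ) = m + n + 2 by
          simp [Fin.val_last]; omega] at hlast
        rw [Prod.ext_iff, Prod.ext_iff] at hlast
        refine ⟨⟨hlast.2.1, hlast.2.2⟩, hlast.1, ?_⟩
        intro t
        have := h t.castSucc
        rw [show m + 1 + ((t.castSucc : Fin (n+2)) : ℕ) = ↑(⟨m + ↑t, by omega⟩ : Fin (m+n+1)) + 1 by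
          simp [Fin.coe_castSucc]; omega] at this
        exact this
      · rintro ⟨⟨hx, hy⟩, hz, hB⟩ t
        rcases Fin.eq_castSucc_or_eq_last t with ⟨u, rfl⟩ | rfl
        · have := hB u
          rw [show m + 1 + ((u.castSucc : Fin (n+2)) : ℕ) = ↑(⟨m + ↑u, by omega⟩ : Fin (m+n+1)) + 1 by
            simp [Fin.coe_castSucc]; omega]
          exact this
        · rw [show m + 1 + ((Fin.last (n+1) : Fin (n+2)) : ℕ) = m + n + 2 by
            simp [Fin.val_last]; omega]
          rw [Prod.ext_iff, Prod.ext_iff]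
          exact ⟨hz, hx, hy⟩
    have e1 := hemit (m+n+1) (v (Fin.last (n+1))).2.1 (v (Fin.last (n+1))).2.2
      (v (Fin.last (n+1))).1 B1
    rw [show m + n + 1 + 1 = m + n + 2 from rfl] at e1
    rw [hset, e1]
    have key : ℙ ({ω | Z (m+n+2) ω = (v (Fin.last (n+1))).1} ∩
        {ω : Ω | (fun i : Fin (m+n+1) => (Z (↑i + 1) ω, X (↑i + 1) ω, Y (↑i + 1) ω)) ∈ B1})
        = ENNReal.ofReal (P (v ((Fin.last n).castSucc)).1 (v (Fin.last (n+1))).1) *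
          ℙ (cylEvent Z X Y m n (fun t => v t.castSucc)) := by
      conv_lhs => rw [hZsub]
      rw [hmarkov (m+n) _ _ B1, ← hZsub, hhist]
    rw [key, IH m (fun t => v t.castSucc)]
    rw [Fin.prod_univ_castSucc
        (fun t : Fin (n+2) => ENNReal.ofReal (e (v t).1 (v t).2.1 (v t).2.2)),
      Fin.prod_univ_castSucc
        (fun t : Fin (n+1) => ENNReal.ofReal (P (v t.castSucc).1 (v t.succ).1))]
    simp only [Fin.succ_castSucc, Fin.castSucc_zero, Fin.succ_last]
    ring

end CYL
section S7
variable {Ω S A : Type*} [MeasurableSpace Ω]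
    [Fintype S] [DecidableEq S] [MeasurableSpace S] [MeasurableSingletonClass S]
    [Fintype A] [DecidableEq A] [MeasurableSpace A] [MeasurableSingletonClass A]
    (ℙ : Measure Ω) [IsProbabilityMeasure ℙ]
    (Z : ℕ → Ω → S) (X Y : ℕ → Ω → A)

noncomputable def Vmap (m n : ℕ) (ω : Ω) : Fin n → S × A × A :=
  fun t => (Z (m+1+t) ω, X (m+1+t) ω, Y (m+1+t) ω)

noncomputable def muZ (m : ℕ) (s : S) : ℝ := (ℙ {ω | Z (m+1) ω = s}).toReal

noncomputable def blockInt (m n : ℕ) : ℝ :=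
  ∫ ω, ((LCS (word (fun i => X i ω) (m+1) n) (word (fun i => Y i ω) (m+1) n) : ℝ)) ∂ℙ

variable {Z X Y}
variable (hZ : ∀ n, Measurable (Z n)) (hX : ∀ n, Measurable (X n)) (hY : ∀ n, Measurable (Y n))

include hZ hX hY in
lemma Vmap_measurable (m n : ℕ) : Measurable (Vmap Z X Y m n) :=
  measurable_pi_lambda _ fun _ => ((hZ _).prodMk ((hX _).prodMk (hY _)))

lemma word_eq_ofFn {α : Type*} (X' : ℕ → α) (a len : ℕ) :
    word X' a len = List.ofFn (fun t : Fin len => X' (a + t)) := by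
  apply List.ext_getElem <;> simp [word]

lemma word_eq_xl (m n : ℕ) (ω : Ω) :
    word (fun i => X i ω) (m+1) n = xl (Vmap Z X Y m n ω) := by
  rw [word_eq_ofFn]; rfl

lemma word_eq_yl (m n : ℕ) (ω : Ω) :
    word (fun i => Y i ω) (m+1) n = yl (Vmap Z X Y m n ω) := by
  rw [word_eq_ofFn]; rfl

include hZ hX hY in
lemma blockInt_eq_sum (m n : ℕ) :
    blockInt ℙ X Y m n = ∑ v : Fin n → S × A × A,
      (LCS (xl v) (yl v) : ℝ) * (ℙ ((Vmap Z X Y m n) ⁻¹' {v})).toReal := by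
  have hV := Vmap_measurable hZ hX hY (Ω := Ω) m n
  have hg : Measurable (fun v : Fin n → S × A × A => (LCS (xl v) (yl v) : ℝ)) :=
    measurable_of_countable _
  have hfun : (fun ω => ((LCS (word (fun i => X i ω) (m+1) n)
      (word (fun i => Y i ω) (m+1) n) : ℝ)))
      = fun ω => (LCS (xl (Vmap Z X Y m n ω)) (yl (Vmap Z X Y m n ω)) : ℝ) :=
    funext fun ω => by rw [word_eq_xl (Z := Z) m n ω, word_eq_yl (Z := Z) m n ω]
  unfold blockInt
  rw [hfun]
  rw [← integral_map hV.aemeasurable hg.aestronglyMeasurable]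
  haveI := Measure.isProbabilityMeasure_map (μ := ℙ) hV.aemeasurable
  rw [integral_fintype _]
  apply Finset.sum_congr rfl
  intro v _
  rw [Measure.real, Measure.map_apply hV (measurableSet_singleton v), smul_eq_mul, mul_comm]
  exact Integrable.of_finite

include hZ hX hY in
lemma blockInt_integrable (m n : ℕ) :
    Integrable (fun ω => ((LCS (word (fun i => X i ω) (m+1) n)
      (word (fun i => Y i ω) (m+1) n) : ℝ))) ℙ := by
  have hV := Vmap_measurable hZ hX hY (Ω := Ω) m n
  have hg : Measurable (fun v : Fin n → S × A × A => (LCS (xl v) (yl v) : ℝ)) :=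
    measurable_of_countable _
  have hfun : (fun ω => ((LCS (word (fun i => X i ω) (m+1) n)
      (word (fun i => Y i ω) (m+1) n) : ℝ)))
      = (fun v : Fin n → S × A × A => (LCS (xl v) (yl v) : ℝ)) ∘ (Vmap Z X Y m n) :=
    funext fun ω => by
      show _ = (LCS (xl (Vmap Z X Y m n ω)) (yl (Vmap Z X Y m n ω)) : ℝ)
      rw [word_eq_xl (Z := Z) m n ω, word_eq_yl (Z := Z) m n ω]
  rw [hfun]
  haveI := Measure.isProbabilityMeasure_map (μ := ℙ) hV.aemeasurable
  exact (integrable_map_measure hg.aestronglyMeasurable hV.aemeasurable).mp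
    (Integrable.of_finite)

variable {P : S → S → ℝ} {e : S → A → A → ℝ}
variable (hProw : ∀ s, ∑ s', P s s' = 1) (hPnn : ∀ s s', 0 ≤ P s s')
variable (herow : ∀ s, ∑ x, ∑ y, e s x y = 1) (henn : ∀ s x y, 0 ≤ e s x y)

include hZ hX hY hPnn henn in
lemma blockInt_eq_muFc
    (hcyl : ∀ (n m : ℕ) (v : Fin (n+1) → S × A × A),
      ℙ (cylEvent Z X Y m n v)
        = ℙ {ω | Z (m+1) ω = (v 0).1}
          * (∏ t, ENNReal.ofReal (e (v t).1 (v t).2.1 (v t).2.2))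
          * ∏ t : Fin n, ENNReal.ofReal (P (v t.castSucc).1 (v t.succ).1))
    (m n : ℕ) :
    blockInt ℙ X Y m (n+1) = ∑ s, muZ ℙ Z m s * Fc P e n s := by
  rw [blockInt_eq_sum ℙ hZ hX hY m (n+1)]
  have hpre : ∀ v : Fin (n+1) → S × A × A,
      (Vmap Z X Y m (n+1)) ⁻¹' {v} = cylEvent Z X Y m n v := by
    intro v
    ext ω
    simp only [Set.mem_preimage, Set.mem_singleton_iff, cylEvent, Set.mem_setOf_eq, funext_iff]
    rfl
  have htr : ∀ v : Fin (n+1) → S × A × A,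
      (ℙ (cylEvent Z X Y m n v)).toReal = muZ ℙ Z m (v 0).1 * wt P e n v := by
    intro v
    rw [hcyl n m v, ENNReal.toReal_mul, ENNReal.toReal_mul, ENNReal.toReal_prod,
      ENNReal.toReal_prod]
    rw [Finset.prod_congr rfl (fun t (_ : t ∈ Finset.univ) =>
        ENNReal.toReal_ofReal (henn (v t).1 (v t).2.1 (v t).2.2)),
      Finset.prod_congr rfl (fun t (_ : t ∈ Finset.univ) =>
        ENNReal.toReal_ofReal (hPnn (v t.castSucc).1 (v t.succ).1))]
    unfold wt muZ
    ring
  rw [Finset.sum_congr rfl fun v _ => by rw [hpre v, htr v]]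
  rw [sum_fiber (fun t (u : Fin (n+1) → S × A × A) =>
    (LCS (xl u) (yl u) : ℝ) * (muZ ℙ Z m t * wt P e n u))]
  apply Finset.sum_congr rfl
  intro s _
  unfold Fc
  rw [Finset.mul_sum]
  apply Finset.sum_congr rfl
  intro u _
  split
  · ring
  · rw [mul_zero]

include hZ in
lemma measure_partition (E : Set Ω) (hE : MeasurableSet E) (m : ℕ) :
    ℙ E = ∑ s : S, ℙ (E ∩ (Z (m+1)) ⁻¹' {s}) := by
  have hcover : E = ⋃ s ∈ (Finset.univ : Finset S), E ∩ (Z (m+1)) ⁻¹' {s} := by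
    ext ω
    simp only [Set.mem_iUnion, Set.mem_inter_iff, Set.mem_preimage, Set.mem_singleton_iff]
    constructor
    · intro h; exact ⟨Z (m+1) ω, Finset.mem_univ _, h, rfl⟩
    · rintro ⟨s, _, h, _⟩; exact h
  conv_lhs => rw [hcover]
  rw [measure_biUnion_finset]
  · intro s _ t _ hst
    have := Set.pairwiseDisjoint_fiber (Z (m+1)) (Set.univ : Set S)
      (Set.mem_univ s) (Set.mem_univ t) hst
    exact this.mono Set.inter_subset_right Set.inter_subset_right
  · intro s _
    exact hE.inter ((hZ (m+1)) (measurableSet_singleton s))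

include hZ in
lemma muZ_sum_one (m : ℕ) : ∑ s : S, muZ ℙ Z m s = 1 := by
  have h1 : ∀ s : S, {ω | Z (m+1) ω = s} = (Z (m+1)) ⁻¹' {s} := fun s => rfl
  unfold muZ
  rw [Finset.sum_congr rfl fun s _ => by rw [h1 s]]
  rw [← ENNReal.toReal_sum (fun s _ => measure_ne_top ℙ _)]
  rw [sum_measure_preimage_singleton Finset.univ
    (fun s _ => (hZ (m+1)) (measurableSet_singleton s))]
  simp

lemma muZ_nonneg (m : ℕ) (s : S) : 0 ≤ muZ ℙ Z m s := ENNReal.toReal_nonneg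

lemma muZ_le_one (m : ℕ) (s : S) : muZ ℙ Z m s ≤ 1 := by
  unfold muZ
  have h1 := ENNReal.toReal_mono (by simp : (1 : ENNReal) ≠ ⊤)
    (prob_le_one (μ := ℙ) (s := {ω | Z (m+1) ω = s}))
  simpa using h1

include hZ hPnn in
lemma muZ_rec
    (hmarkov : ∀ (n : ℕ) (z z' : S) (B : Set (Fin (n + 1) → S × A × A)),
      ℙ ({ω | Z (n + 2) ω = z'} ∩ ({ω | Z (n + 1) ω = z} ∩
          {ω | (fun i : Fin (n + 1) => (Z (↑i + 1) ω, X (↑i + 1) ω, Y (↑i + 1) ω)) ∈ B}))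
        = ENNReal.ofReal (P z z') *
          ℙ ({ω | Z (n + 1) ω = z} ∩
            {ω | (fun i : Fin (n + 1) => (Z (↑i + 1) ω, X (↑i + 1) ω, Y (↑i + 1) ω)) ∈ B}))
    (m : ℕ) (s' : S) :
    muZ ℙ Z (m+1) s' = ∑ s : S, P s s' * muZ ℙ Z m s := by
  have huniv : ∀ ω : Ω, (fun i : Fin (m+1) => (Z (↑i + 1) ω, X (↑i + 1) ω, Y (↑i + 1) ω)) ∈
      (Set.univ : Set (Fin (m+1) → S × A × A)) := fun ω => Set.mem_univ _
  have hstep : ∀ s : S, ℙ ({ω | Z (m+2) ω = s'} ∩ {ω | Z (m+1) ω = s})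
      = ENNReal.ofReal (P s s') * ℙ {ω | Z (m+1) ω = s} := by
    intro s
    have h0 := hmarkov m s s' Set.univ
    have h1 : {ω : Ω | (fun i : Fin (m+1) => (Z (↑i + 1) ω, X (↑i + 1) ω, Y (↑i + 1) ω)) ∈
        (Set.univ : Set (Fin (m+1) → S × A × A))} = Set.univ := by
      ext ω; simp
    rw [h1, Set.inter_univ] at h0
    exact h0
  have hpart := measure_partition ℙ hZ {ω | Z (m+2) ω = s'}
    ((hZ (m+2)) (measurableSet_singleton s')) m
  have hps : ∀ s : S, {ω | Z (m+2) ω = s'} ∩ (Z (m+1)) ⁻¹' {s}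
      = {ω | Z (m+2) ω = s'} ∩ {ω | Z (m+1) ω = s} := fun s => rfl
  rw [Finset.sum_congr rfl (fun s _ => by rw [hps s, hstep s])] at hpart
  unfold muZ
  rw [show m+1+1 = m+2 from rfl, hpart,
    ENNReal.toReal_sum (fun s _ => by
      exact ENNReal.mul_ne_top ENNReal.ofReal_ne_top (measure_ne_top ℙ _))]
  apply Finset.sum_congr rfl
  intro s _
  rw [ENNReal.toReal_mul, ENNReal.toReal_ofReal (hPnn s s')]

include hZ hPnn in
lemma muZ_kstep
    (hmarkov : ∀ (n : ℕ) (z z' : S) (B : Set (Fin (n + 1) → S × A × A)),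
      ℙ ({ω | Z (n + 2) ω = z'} ∩ ({ω | Z (n + 1) ω = z} ∩
          {ω | (fun i : Fin (n + 1) => (Z (↑i + 1) ω, X (↑i + 1) ω, Y (↑i + 1) ω)) ∈ B}))
        = ENNReal.ofReal (P z z') *
          ℙ ({ω | Z (n + 1) ω = z} ∩
            {ω | (fun i : Fin (n + 1) => (Z (↑i + 1) ω, X (↑i + 1) ω, Y (↑i + 1) ω)) ∈ B})) :
    ∀ (k m : ℕ) (s' : S),
      muZ ℙ Z (m+k) s' = ∑ s : S, ((Matrix.of P)^k) s s' * muZ ℙ Z m s := by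
  intro k
  induction k with
  | zero =>
    intro m s'
    simp only [pow_zero, Matrix.one_apply, Nat.add_zero, ite_mul, one_mul, zero_mul]
    rw [Finset.sum_ite_eq' Finset.univ s' (fun s => muZ ℙ Z m s)]
    simp
  | succ k IH =>
    intro m s'
    rw [show m + (k+1) = (m+k) + 1 from rfl,
      muZ_rec ℙ hZ hPnn hmarkov (m+k) s',
      Finset.sum_congr rfl fun t (_ : t ∈ Finset.univ) => by rw [IH m t]]
    have hterm : ∀ t : S, P t s' * ∑ s, ((Matrix.of P)^k) s t * muZ ℙ Z m s
        = ∑ s, ((Matrix.of P)^k) s t * P t s' * muZ ℙ Z m s := by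
      intro t
      rw [Finset.mul_sum]
      exact Finset.sum_congr rfl fun s _ => by ring
    rw [Finset.sum_congr rfl fun t _ => hterm t, Finset.sum_comm]
    apply Finset.sum_congr rfl
    intro s _
    rw [pow_succ, Matrix.mul_apply, Finset.sum_mul]
    apply Finset.sum_congr rfl
    intro t _
    show ((Matrix.of P)^k) s t * P t s' * muZ ℙ Z m s
      = ((Matrix.of P)^k) s t * Matrix.of P t s' * muZ ℙ Z m s
    simp only [Matrix.of_apply]

end S7
section S8
variable {Ω S A : Type*} [MeasurableSpace Ω]
    [Fintype S] [DecidableEq S] [MeasurableSpace S] [MeasurableSingletonClass S]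
    [Fintype A] [DecidableEq A] [MeasurableSpace A] [MeasurableSingletonClass A]
    (ℙ : Measure Ω) [IsProbabilityMeasure ℙ]
    {Z : ℕ → Ω → S} {X Y : ℕ → Ω → A}
variable (hZ : ∀ n, Measurable (Z n)) (hX : ∀ n, Measurable (X n)) (hY : ∀ n, Measurable (Y n))

lemma word_append {α : Type*} (X' : ℕ → α) (a n1 n2 : ℕ) :
    word X' a (n1+n2) = word X' a n1 ++ word X' (a+n1) n2 := by
  apply List.ext_getElem
  · simp [word]
  · intro i h1 h2
    simp only [word, List.getElem_map, List.getElem_range, List.getElem_append,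
      List.length_map, List.length_range]
    split
    · rfl
    · next h => congr 1; omega

include hZ hX hY in
lemma blockInt_superadd (m n : ℕ) :
    blockInt ℙ X Y 0 m + blockInt ℙ X Y m n ≤ blockInt ℙ X Y 0 (m+n) := by
  have hpath : ∀ ω : Ω,
      (LCS (word (fun i => X i ω) (0+1) m) (word (fun i => Y i ω) (0+1) m) : ℝ)
      + (LCS (word (fun i => X i ω) (m+1) n) (word (fun i => Y i ω) (m+1) n) : ℝ)
      ≤ (LCS (word (fun i => X i ω) (0+1) (m+n)) (word (fun i => Y i ω) (0+1) (m+n)) : ℝ) := by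
    intro ω
    rw [word_append (fun i => X i ω) (0+1) m n, word_append (fun i => Y i ω) (0+1) m n,
      show 0+1+m = m+1 by omega]
    have := LCSAux.LCS_superadd (word (fun i => X i ω) (0+1) m)
      (word (fun i => X i ω) (m+1) n) (word (fun i => Y i ω) (0+1) m)
      (word (fun i => Y i ω) (m+1) n)
    exact_mod_cast this
  have hi1 := blockInt_integrable ℙ hZ hX hY 0 m
  have hi2 := blockInt_integrable ℙ hZ hX hY m n
  have hi3 := blockInt_integrable ℙ hZ hX hY 0 (m+n)
  unfold blockInt
  rw [← integral_add hi1 hi2]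
  exact integral_mono (hi1.add hi2) hi3 hpath

include hZ hX hY in
lemma blockInt_nonneg (m n : ℕ) : 0 ≤ blockInt ℙ X Y m n := by
  unfold blockInt
  apply integral_nonneg
  intro ω
  positivity

include hZ hX hY in
lemma blockInt_le (m n : ℕ) : blockInt ℙ X Y m n ≤ n := by
  unfold blockInt
  have hle : ∀ ω : Ω, (LCS (word (fun i => X i ω) (m+1) n)
      (word (fun i => Y i ω) (m+1) n) : ℝ) ≤ (n:ℝ) := by
    intro ω
    have h1 := LCSAux.LCS_le_length_left (word (fun i => X i ω) (m+1) n)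
      (word (fun i => Y i ω) (m+1) n)
    have h2 : (word (fun i => X i ω) (m+1) n).length = n := by simp [word]
    rw [h2] at h1
    exact_mod_cast h1
  calc ∫ ω, ((LCS (word (fun i => X i ω) (m+1) n) (word (fun i => Y i ω) (m+1) n) : ℝ)) ∂ℙ
      ≤ ∫ _ω, (n:ℝ) ∂ℙ :=
        integral_mono (blockInt_integrable ℙ hZ hX hY m n) (integrable_const _) hle
    _ = n := by simp

lemma blockInt_zero (m : ℕ) : blockInt ℙ X Y m 0 = 0 := by
  have hz : ∀ ω : Ω, ((LCS (word (fun i => X i ω) (m+1) 0)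
      (word (fun i => Y i ω) (m+1) 0) : ℕ) : ℝ) = 0 := by
    intro ω
    have h1 := LCSAux.LCS_le_length_left (word (fun i => X i ω) (m+1) 0)
      (word (fun i => Y i ω) (m+1) 0)
    have h2 : (word (fun i => X i ω) (m+1) 0).length = 0 := by simp [word]
    rw [h2, Nat.le_zero] at h1
    rw [h1]
    norm_num
  unfold blockInt
  simp only [hz]
  exact integral_zero Ω ℝ

end S8
section S9
variable {S : Type*} [Fintype S] [Nonempty S]

lemma convex_diff {C : ℝ} (p q f : S → ℝ)
    (hp0 : ∀ t, 0 ≤ p t) (hps : ∑ t, p t = 1)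
    (hq0 : ∀ t, 0 ≤ q t) (hqs : ∑ t, q t = 1)
    (hosc : ∀ t t', f t - f t' ≤ C) :
    (∑ t, p t * f t) - (∑ t, q t * f t) ≤ C := by
  obtain ⟨t1, -, ht1⟩ := Finset.exists_max_image Finset.univ f
    ⟨Classical.arbitrary S, Finset.mem_univ _⟩
  obtain ⟨t0, -, ht0⟩ := Finset.exists_min_image Finset.univ f
    ⟨Classical.arbitrary S, Finset.mem_univ _⟩
  have h1 : (∑ t, p t * f t) ≤ f t1 := by
    calc (∑ t, p t * f t) ≤ ∑ t, p t * f t1 :=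
          Finset.sum_le_sum fun t _ =>
            mul_le_mul_of_nonneg_left (ht1 t (Finset.mem_univ t)) (hp0 t)
      _ = f t1 := by rw [← Finset.sum_mul, hps, one_mul]
  have h2 : f t0 ≤ ∑ t, q t * f t := by
    calc f t0 = ∑ t, q t * f t0 := by rw [← Finset.sum_mul, hqs, one_mul]
      _ ≤ ∑ t, q t * f t :=
          Finset.sum_le_sum fun t _ =>
            mul_le_mul_of_nonneg_left (ht0 t (Finset.mem_univ t)) (hq0 t)
  linarith [hosc t1 t0]

end S9

section S10
variable {Ω S A : Type*} [MeasurableSpace Ω]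
    [Fintype S] [DecidableEq S] [MeasurableSpace S] [MeasurableSingletonClass S]
    [Fintype A] [DecidableEq A] [MeasurableSpace A] [MeasurableSingletonClass A]
    (ℙ : Measure Ω) [IsProbabilityMeasure ℙ]
    {Z : ℕ → Ω → S} {X Y : ℕ → Ω → A}
variable (hZ : ∀ n, Measurable (Z n)) (hX : ∀ n, Measurable (X n)) (hY : ∀ n, Measurable (Y n))
variable {P : S → S → ℝ}

include hZ in
lemma muZ_eps {k : ℕ} {ε : ℝ} (hPnn : ∀ s s', 0 ≤ P s s')
    (hεk : ∀ s s', ε ≤ ((Matrix.of P)^k) s s')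
    (hmarkov : ∀ (n : ℕ) (z z' : S) (B : Set (Fin (n + 1) → S × A × A)),
      ℙ ({ω | Z (n + 2) ω = z'} ∩ ({ω | Z (n + 1) ω = z} ∩
          {ω | (fun i : Fin (n + 1) => (Z (↑i + 1) ω, X (↑i + 1) ω, Y (↑i + 1) ω)) ∈ B}))
        = ENNReal.ofReal (P z z') *
          ℙ ({ω | Z (n + 1) ω = z} ∩
            {ω | (fun i : Fin (n + 1) => (Z (↑i + 1) ω, X (↑i + 1) ω, Y (↑i + 1) ω)) ∈ B}))
    (m : ℕ) (s' : S) : ε ≤ muZ ℙ Z (m+k) s' := by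
  rw [muZ_kstep ℙ hZ hPnn hmarkov k m s']
  calc ε = ∑ s : S, ε * muZ ℙ Z m s := by
        rw [← Finset.mul_sum, muZ_sum_one ℙ hZ m, mul_one]
    _ ≤ ∑ s : S, ((Matrix.of P)^k) s s' * muZ ℙ Z m s :=
        Finset.sum_le_sum fun s _ =>
          mul_le_mul_of_nonneg_right (hεk s s') (muZ_nonneg ℙ m s)

include hZ hX hY in
lemma blockInt_pos_base {a : A} {i j : ℕ} (hi : 1 ≤ i) (hj : 1 ≤ j)
    (L : ℕ) (hiL : i ≤ L) (hjL : j ≤ L) :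
    (ℙ {ω | X i ω = a ∧ Y j ω = a}).toReal ≤ blockInt ℙ X Y 0 L := by
  set E : Set Ω := {ω | X i ω = a ∧ Y j ω = a} with hE
  have hEmeas : MeasurableSet E :=
    ((hX i) (measurableSet_singleton a)).inter ((hY j) (measurableSet_singleton a))
  have hpath : ∀ ω : Ω, E.indicator (fun _ => (1:ℝ)) ω
      ≤ (LCS (word (fun i' => X i' ω) (0+1) L) (word (fun i' => Y i' ω) (0+1) L) : ℝ) := by
    intro ω
    by_cases hω : ω ∈ E
    · rw [Set.indicator_of_mem hω]
      obtain ⟨hx, hy⟩ := hω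
      have hmemx : a ∈ word (fun i' => X i' ω) (0+1) L := by
        simp only [word, List.mem_map, List.mem_range]
        exact ⟨i - 1, by omega, by rw [show 0+1+(i-1) = i by omega, hx]⟩
      have hmemy : a ∈ word (fun i' => Y i' ω) (0+1) L := by
        simp only [word, List.mem_map, List.mem_range]
        exact ⟨j - 1, by omega, by rw [show 0+1+(j-1) = j by omega, hy]⟩
      have := LCSAux.LCS_one_le hmemx hmemy
      exact_mod_cast this
    · rw [Set.indicator_of_notMem hω]
      positivity
  have hind : Integrable (E.indicator (fun _ => (1:ℝ))) ℙ :=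
    (integrable_const (1:ℝ)).indicator hEmeas
  have h1 : ∫ ω, E.indicator (fun _ => (1:ℝ)) ω ∂ℙ ≤ blockInt ℙ X Y 0 L :=
    integral_mono hind (blockInt_integrable ℙ hZ hX hY 0 L) hpath
  rw [integral_indicator_const (1:ℝ) hEmeas] at h1
  simp at h1
  exact h1

end S10

/-- Mean convergence for a hidden Markov model: if `(Z, (X, Y))` is an HMM whose
hidden chain `Z` is a finite-state, aperiodic, irreducible, time-homogeneous Markov
chain (equivalently, all entries of some power `P^k` are bounded below by some
`ε > 0`), and some letter `a` satisfies `P(X_i = Y_j = a) > 0` for some `i, j ≥ 1`,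
then `E[LC_n]/n` converges to some `γ* ∈ (0, 1]`. -/
theorem hmm_lcs_mean_convergence
    {Ω S A : Type*} [MeasurableSpace Ω]
    [Fintype S] [DecidableEq S] [MeasurableSpace S] [MeasurableSingletonClass S]
    [Fintype A] [DecidableEq A] [MeasurableSpace A] [MeasurableSingletonClass A]
    (ℙ : Measure Ω) [IsProbabilityMeasure ℙ]
    (Z : ℕ → Ω → S) (X Y : ℕ → Ω → A)
    (hZ : ∀ n, Measurable (Z n)) (hX : ∀ n, Measurable (X n)) (hY : ∀ n, Measurable (Y n))
    (P : S → S → ℝ) (e : S → A → A → ℝ)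
    (hProw : ∀ s, ∑ s', P s s' = 1) (hPnn : ∀ s s', 0 ≤ P s s')
    (herow : ∀ s, ∑ x, ∑ y, e s x y = 1) (henn : ∀ s x y, 0 ≤ e s x y)
    -- `Z` is a time-homogeneous Markov chain with transition matrix `P`
    (hmarkov : ∀ (n : ℕ) (z z' : S) (B : Set (Fin (n + 1) → S × A × A)),
      ℙ ({ω | Z (n + 2) ω = z'} ∩ ({ω | Z (n + 1) ω = z} ∩
          {ω | (fun i : Fin (n + 1) => (Z (↑i + 1) ω, X (↑i + 1) ω, Y (↑i + 1) ω)) ∈ B}))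
        = ENNReal.ofReal (P z z') *
          ℙ ({ω | Z (n + 1) ω = z} ∩
            {ω | (fun i : Fin (n + 1) => (Z (↑i + 1) ω, X (↑i + 1) ω, Y (↑i + 1) ω)) ∈ B}))
    -- each `Z_n` emits the pair `(X_n, Y_n)` according to `e`, independently of the past
    (hemit : ∀ (n : ℕ) (x y : A) (z : S) (B : Set (Fin n → S × A × A)),
      ℙ ({ω | X (n + 1) ω = x ∧ Y (n + 1) ω = y} ∩ ({ω | Z (n + 1) ω = z} ∩
          {ω | (fun i : Fin n => (Z (↑i + 1) ω, X (↑i + 1) ω, Y (↑i + 1) ω)) ∈ B}))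
        = ENNReal.ofReal (e z x y) *
          ℙ ({ω | Z (n + 1) ω = z} ∩
            {ω | (fun i : Fin n => (Z (↑i + 1) ω, X (↑i + 1) ω, Y (↑i + 1) ω)) ∈ B}))
    -- aperiodicity and irreducibility: all entries of some power of `P` are `≥ ε > 0`
    (hirr : ∃ k : ℕ, 1 ≤ k ∧ ∃ ε : ℝ, 0 < ε ∧ ∀ s s' : S, ε ≤ ((Matrix.of P) ^ k) s s')
    -- some common letter is emitted with positive probability
    (hpos : ∃ (a : A) (i j : ℕ), 1 ≤ i ∧ 1 ≤ j ∧ 0 < ℙ {ω | X i ω = a ∧ Y j ω = a}) :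
    ∃ γ : ℝ, 0 < γ ∧ γ ≤ 1 ∧
      Tendsto (fun n : ℕ =>
          (∫ ω, ((LCS (word (fun i => X i ω) 1 n) (word (fun i => Y i ω) 1 n) : ℝ)) ∂ℙ) / n)
        atTop (nhds γ) := by
  classical
  obtain ⟨k, hk, ε, hε, hεk⟩ := hirr
  obtain ⟨a, i, j, hi, hj, hpos0⟩ := hpos
  haveI hnΩ : Nonempty Ω := by
    by_contra h
    rw [not_nonempty_iff] at h
    have h1 : (Set.univ : Set Ω) = ∅ := Set.univ_eq_empty_iff.2 h
    have h2 : ℙ Set.univ = 1 := measure_univ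
    rw [h1, measure_empty] at h2
    simp at h2
  haveI : Nonempty S := ⟨Z 1 (Classical.arbitrary Ω)⟩
  have hcyl := cyl_prob ℙ Z X Y P e hmarkov hemit
  have hcard : (0:ℝ) < Fintype.card S := by
    have := Fintype.card_pos_iff.2 ‹Nonempty S›
    exact_mod_cast this
  set C : ℝ := 3*k / (ε * Fintype.card S) with hC
  have hC0 : 0 ≤ C := by
    apply div_nonneg
    · positivity
    · positivity
  have hosc : ∀ (n : ℕ) (s s' : S), Fc P e n s - Fc P e n s' ≤ C :=
    Fc_osc hProw hPnn herow henn hk hε hεk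
  have hBF : ∀ m n, blockInt ℙ X Y m (n+1) = ∑ s, muZ ℙ Z m s * Fc P e n s :=
    fun m n => blockInt_eq_muFc ℙ hZ hX hY hPnn henn hcyl m n
  have hcomp : ∀ m n, blockInt ℙ X Y 0 (n+1) - blockInt ℙ X Y m (n+1) ≤ C := by
    intro m n
    rw [hBF 0 n, hBF m n]
    exact convex_diff (muZ ℙ Z 0) (muZ ℙ Z m) (Fc P e n)
      (muZ_nonneg ℙ 0) (muZ_sum_one ℙ hZ 0) (muZ_nonneg ℙ m) (muZ_sum_one ℙ hZ m)
      (hosc n)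
  have hsuper := blockInt_superadd ℙ hZ hX hY
  have ha0 : blockInt ℙ X Y 0 0 = 0 := blockInt_zero ℙ 0
  have hale : ∀ n : ℕ, blockInt ℙ X Y 0 n ≤ n := fun n => blockInt_le ℙ hZ hX hY 0 n
  have hann : ∀ n : ℕ, 0 ≤ blockInt ℙ X Y 0 n := fun n => blockInt_nonneg ℙ hZ hX hY 0 n
  set u : ℕ → ℝ := fun n => C - blockInt ℙ X Y 0 n with hu
  have hsub : Subadditive u := by
    intro m n
    rcases n with _ | n'
    · have h1 : u (m + 0) = u m := by rw [Nat.add_zero]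
      have h2 : u 0 = C := by simp only [hu, ha0, sub_zero]
      rw [h1, h2]
      linarith
    · have h1 := hsuper m (n'+1)
      have h2 := hcomp m n'
      show C - blockInt ℙ X Y 0 (m+(n'+1)) ≤ (C - blockInt ℙ X Y 0 m)
        + (C - blockInt ℙ X Y 0 (n'+1))
      linarith
  have hdivlb : ∀ n : ℕ, -1 ≤ u n / n := by
    intro n
    rcases Nat.eq_zero_or_pos n with rfl | hn
    · norm_num
    · have hnR : (0:ℝ) < n := by exact_mod_cast hn
      rw [le_div_iff₀ hnR]
      have h1 := hale n
      have h2 : u n = C - blockInt ℙ X Y 0 n := rfl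
      linarith
  have hbdd : BddBelow (Set.range fun n : ℕ => u n / n) := by
    refine ⟨-1, ?_⟩
    rintro x ⟨n, rfl⟩
    exact hdivlb n
  have hlim := hsub.tendsto_lim hbdd
  have htend : Tendsto (fun n : ℕ =>
      (∫ ω, ((LCS (word (fun i => X i ω) 1 n) (word (fun i => Y i ω) 1 n) : ℝ)) ∂ℙ) / n)
      atTop (nhds (-hsub.lim)) := by
    have hfun : (fun n : ℕ =>
        (∫ ω, ((LCS (word (fun i => X i ω) 1 n) (word (fun i => Y i ω) 1 n) : ℝ)) ∂ℙ) / n)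
        = fun n : ℕ => C / n - u n / n := by
      funext n
      have hbd : blockInt ℙ X Y 0 n
          = ∫ ω, ((LCS (word (fun i => X i ω) 1 n) (word (fun i => Y i ω) 1 n) : ℝ)) ∂ℙ := rfl
      rw [← hbd, ← sub_div]
      congr 1
      show blockInt ℙ X Y 0 n = C - (C - blockInt ℙ X Y 0 n)
      ring
    rw [hfun]
    have := (tendsto_const_div_atTop_nhds_zero_nat C).sub hlim
    simpa using this
  -- positivity
  set L := max i j with hL
  have hL1 : 1 ≤ L := le_trans hi (le_max_left i j)
  set δ : ℝ := (ℙ {ω | X i ω = a ∧ Y j ω = a}).toReal with hδ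
  have hδpos : 0 < δ := ENNReal.toReal_pos (ne_of_gt hpos0) (measure_ne_top ℙ _)
  have hbase : δ ≤ blockInt ℙ X Y 0 L :=
    blockInt_pos_base ℙ hZ hX hY hi hj L (le_max_left i j) (le_max_right i j)
  have hmue : ∀ (m : ℕ) (s' : S), ε ≤ muZ ℙ Z (m+k) s' :=
    fun m s' => muZ_eps ℙ hZ hPnn hεk hmarkov m s'
  have hblock : ∀ m : ℕ, ε * δ ≤ blockInt ℙ X Y (m+k) L := by
    intro m
    obtain ⟨L', hL'⟩ : ∃ L', L = L'+1 := ⟨L-1, by omega⟩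
    rw [hL']
    rw [hL'] at hbase
    rw [hBF (m+k) L']
    have hstep1 : ε * δ ≤ ε * blockInt ℙ X Y 0 (L'+1) :=
      mul_le_mul_of_nonneg_left hbase hε.le
    refine le_trans hstep1 ?_
    rw [hBF 0 L', Finset.mul_sum]
    apply Finset.sum_le_sum
    intro s _
    have hFc := Fc_nonneg hPnn henn (P := P) (e := e) L' s
    have h1 : muZ ℙ Z 0 s ≤ 1 := muZ_le_one ℙ 0 s
    have h2 := hmue m s
    calc ε * (muZ ℙ Z 0 s * Fc P e L' s) ≤ ε * (1 * Fc P e L' s) :=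
          mul_le_mul_of_nonneg_left (mul_le_mul_of_nonneg_right h1 hFc) hε.le
      _ = ε * Fc P e L' s := by ring
      _ ≤ muZ ℙ Z (m+k) s * Fc P e L' s := mul_le_mul_of_nonneg_right h2 hFc
  have hchain : ∀ r : ℕ, (r:ℝ) * (ε * δ) ≤ blockInt ℙ X Y 0 (k + r*L) := by
    intro r
    induction r with
    | zero => simpa using blockInt_nonneg ℙ hZ hX hY 0 k
    | succ r IH =>
      have h1 := hsuper (k + r*L) L
      have h2 := hblock (r*L)
      rw [show r*L + k = k + r*L by omega] at h2
      have h3 : k + (r+1)*L = (k + r*L) + L := by rw [Nat.succ_mul]; omega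
      rw [h3]
      push_cast
      push_cast at IH
      linarith
  obtain ⟨r0, hr0⟩ := exists_nat_ge ((C+1)/(ε*δ))
  have hεδ : 0 < ε*δ := mul_pos hε hδpos
  have hr1 : C + 1 ≤ r0 * (ε*δ) := by
    rw [div_le_iff₀ hεδ] at hr0
    linarith
  have hNpos : 0 < k + r0*L := by omega
  have haN : C + 1 ≤ blockInt ℙ X Y 0 (k + r0*L) := le_trans hr1 (hchain r0)
  have huN : u (k + r0*L) / ((k + r0*L : ℕ) : ℝ) < 0 := by
    apply div_neg_of_neg_of_pos
    · show C - blockInt ℙ X Y 0 (k + r0*L) < 0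
      linarith
    · exact_mod_cast hNpos
  have hlimneg : hsub.lim < 0 :=
    lt_of_le_of_lt (hsub.lim_le_div hbdd (by omega : k + r0*L ≠ 0)) huN
  have hlimge : -1 ≤ hsub.lim := by
    rw [Subadditive.lim]
    apply le_csInf
    · exact ⟨(fun n : ℕ => u n / n) 1, 1, Set.mem_Ici.2 le_rfl, rfl⟩
    · rintro b ⟨n, -, rfl⟩
      exact hdivlb n
  exact ⟨-hsub.lim, by linarith, by linarith, htend⟩
end

section
/- With B_{k,n} = ∪_{r=k}^{⌈2kn/(2n-1)⌉} B_{k,n}^r as above, for all sufficiently large k (in particular k > n ≥ 2), |B_{k,n}| ≤ exp(10 k ln n). -/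
/-- `(ν, τ)` (encoded as functions `ℕ → ℕ`, with entries `ν 0, …, ν r` representing
`ν₁, …, ν_{r+1}` and pinned to `kn+1` from index `r` on) is an `r`-partition for
words of length `kn`. -/
def IsRPartition (n k r : ℕ) (ν τ : ℕ → ℕ) : Prop :=
  ν 0 = 1 ∧ τ 0 = 1 ∧ Monotone ν ∧ Monotone τ ∧
  (∀ i, r ≤ i → ν i = k * n + 1) ∧ (∀ i, r ≤ i → τ i = k * n + 1) ∧
  (∀ j : ℕ, j + 1 < r →
    (ν (j + 1) - ν j) + (τ (j + 1) - τ j) = 2 * n - 1 ∨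
    (ν (j + 1) - ν j) + (τ (j + 1) - τ j) = 2 * n) ∧
  (∀ j : ℕ, j + 1 = r → (ν (j + 1) - ν j) + (τ (j + 1) - τ j) < 2 * n)

lemma incr_bound (n k r : ℕ) (ν τ : ℕ → ℕ) (h : IsRPartition n k r ν τ) (j : ℕ) :
    (ν (j + 1) - ν j) + (τ (j + 1) - τ j) ≤ 2 * n := by
  obtain ⟨h0, t0, hm, tm, hp, tp, hs, hl⟩ := h
  rcases lt_trichotomy (j + 1) r with hj | hj | hj
  · rcases hs j hj with e | e <;> omega
  · have := hl j hj; omega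
  · have h1 := hp j (by omega)
    have h2 := hp (j + 1) (by omega)
    have h3 := tp j (by omega)
    have h4 := tp (j + 1) (by omega)
    omega

lemma partition_eq (n k r : ℕ) (ν ν' τ τ' : ℕ → ℕ)
    (h : IsRPartition n k r ν τ) (h' : IsRPartition n k r ν' τ')
    (hinc : ∀ j, j < r → ν (j + 1) - ν j = ν' (j + 1) - ν' j)
    (hinc' : ∀ j, j < r → τ (j + 1) - τ j = τ' (j + 1) - τ' j) :
    ν = ν' ∧ τ = τ' := by
  obtain ⟨h0, t0, hm, tm, hp, tp, hs, hl⟩ := h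
  obtain ⟨h0', t0', hm', tm', hp', tp', hs', hl'⟩ := h'
  have key : ∀ i, ν i = ν' i ∧ τ i = τ' i := by
    intro i
    induction i with
    | zero => exact ⟨h0.trans h0'.symm, t0.trans t0'.symm⟩
    | succ i ih =>
      by_cases hir : r ≤ i + 1
      · rw [hp _ hir, hp' _ hir, tp _ hir, tp' _ hir]; exact ⟨rfl, rfl⟩
      · have hi : i < r := by omega
        show ν (i + 1) = ν' (i + 1) ∧ τ (i + 1) = τ' (i + 1)
        have m1 : ν i ≤ ν (i + 1) := hm (Nat.le_succ i)
        have m2 : ν' i ≤ ν' (i + 1) := hm' (Nat.le_succ i)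
        have m3 : τ i ≤ τ (i + 1) := tm (Nat.le_succ i)
        have m4 : τ' i ≤ τ' (i + 1) := tm' (Nat.le_succ i)
        have e1 := hinc i hi
        have e2 := hinc' i hi
        omega
  exact ⟨funext fun i => (key i).1, funext fun i => (key i).2⟩

def encodeP (n R : ℕ) (q : ℕ × (ℕ → ℕ) × (ℕ → ℕ)) :
    Fin (R + 1) × (Fin R → Fin (2 * n + 1) × Fin (2 * n + 1)) :=
  (⟨min q.1 R, Nat.lt_succ_of_le (min_le_right _ _)⟩,
   fun j => (⟨min (q.2.1 (j.1 + 1) - q.2.1 j.1) (2 * n), Nat.lt_succ_of_le (min_le_right _ _)⟩,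
             ⟨min (q.2.2 (j.1 + 1) - q.2.2 j.1) (2 * n), Nat.lt_succ_of_le (min_le_right _ _)⟩))

lemma arith_bound (n k R : ℕ) (hn : 2 ≤ n) (hk : 16 ≤ k) (h3R : 3 * R ≤ 4 * k + 2) :
    (R + 1) * ((2 * n + 1) * (2 * n + 1)) ^ R ≤ n ^ (10 * k) := by
  have h1 : (2 * n + 1) * (2 * n + 1) ≤ n ^ 6 := by
    have h4 : 2 ^ 4 ≤ n ^ 4 := Nat.pow_le_pow_left hn 4
    have h6 : n ^ 6 = n ^ 4 * (n * n) := by ring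
    nlinarith
  have h2 : ((2 * n + 1) * (2 * n + 1)) ^ R ≤ n ^ (8 * k + 4) := by
    calc ((2 * n + 1) * (2 * n + 1)) ^ R ≤ (n ^ 6) ^ R := Nat.pow_le_pow_left h1 R
      _ = n ^ (6 * R) := by rw [← pow_mul]
      _ ≤ n ^ (8 * k + 4) := Nat.pow_le_pow_right (by omega) (by omega)
  have h3 : R + 1 ≤ n ^ (2 * k - 4) := by
    have ha : R + 1 ≤ 2 * k := by omega
    have hb : k < 2 ^ k := Nat.lt_two_pow_self
    have hc : 2 * k < 2 ^ (k + 1) := by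
      calc 2 * k < 2 * 2 ^ k := by omega
        _ = 2 ^ (k + 1) := by ring
    have hd : 2 ^ (k + 1) ≤ 2 ^ (2 * k - 4) := Nat.pow_le_pow_right (by omega) (by omega)
    have he : 2 ^ (2 * k - 4) ≤ n ^ (2 * k - 4) := Nat.pow_le_pow_left hn _
    omega
  calc (R + 1) * ((2 * n + 1) * (2 * n + 1)) ^ R
      ≤ n ^ (2 * k - 4) * n ^ (8 * k + 4) := Nat.mul_le_mul h3 h2
    _ = n ^ ((2 * k - 4) + (8 * k + 4)) := by rw [← pow_add]
    _ = n ^ (10 * k) := by congr 1; omega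

/-- With `B_{k,n} = ∪_{r=k}^{⌈2kn/(2n-1)⌉} B_{k,n}^r`, for `k > n ≥ 2` and `k`
sufficiently large, `|B_{k,n}| ≤ exp(10 k ln n)`. -/
theorem partition_set_count_bound (n : ℕ) (hn : 2 ≤ n) :
    ∃ k₀ : ℕ, ∀ k : ℕ, k₀ ≤ k → n < k →
      (Set.ncard {q : ℕ × (ℕ → ℕ) × (ℕ → ℕ) |
          k ≤ q.1 ∧ q.1 ≤ ⌈(2 * k * n : ℚ) / (2 * n - 1)⌉₊ ∧
          IsRPartition n k q.1 q.2.1 q.2.2} : ℝ)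
        ≤ Real.exp (10 * k * Real.log n) := by
  classical
  refine ⟨16, fun k hk hnk => ?_⟩
  obtain ⟨R, hRdef⟩ : ∃ R : ℕ, R = ⌈(2 * k * n : ℚ) / (2 * n - 1)⌉₊ := ⟨_, rfl⟩
  rw [show (⌈(2 * k * n : ℚ) / (2 * n - 1)⌉₊ : ℕ) = R from hRdef.symm]
  -- bound on R
  have hnQ : (2 : ℚ) ≤ (n : ℚ) := by exact_mod_cast hn
  have hden : (0 : ℚ) < 2 * (n : ℚ) - 1 := by linarith
  have hx : (2 * (k : ℚ) * n) / (2 * n - 1) ≤ 4 * k / 3 := by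
    rw [div_le_div_iff₀ hden (by norm_num)]
    have hkQ : (0 : ℚ) ≤ (k : ℚ) := Nat.cast_nonneg k
    nlinarith
  have hRQ : (R : ℚ) < 4 * k / 3 + 1 := by
    have h1 : (R : ℚ) < (2 * (k : ℚ) * n) / (2 * n - 1) + 1 := by
      rw [hRdef]
      exact Nat.ceil_lt_add_one (div_nonneg (by positivity) (le_of_lt hden))
    linarith
  have h3R : 3 * R ≤ 4 * k + 2 := by
    have h2 : ((3 * R : ℕ) : ℚ) < ((4 * k + 3 : ℕ) : ℚ) := by push_cast; linarith
    have h3 : (3 * R : ℕ) < 4 * k + 3 := Nat.cast_lt.mp h2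
    omega
  -- counting via an injection
  have hcard : (Set.ncard {q : ℕ × (ℕ → ℕ) × (ℕ → ℕ) |
          k ≤ q.1 ∧ q.1 ≤ R ∧
          IsRPartition n k q.1 q.2.1 q.2.2})
      ≤ Nat.card (Fin (R + 1) × (Fin R → Fin (2 * n + 1) × Fin (2 * n + 1))) := by
    rw [← Set.ncard_univ]
    refine Set.ncard_le_ncard_of_injOn (encodeP n R)
      (fun a _ => Set.mem_univ _) ?_ Set.finite_univ
    rintro ⟨r, ν, τ⟩ ⟨hr1, hr2, hP⟩ ⟨r', ν', τ'⟩ ⟨hr1', hr2', hP'⟩ heq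
    simp only [encodeP, Prod.mk.injEq, Fin.mk.injEq] at heq
    obtain ⟨he1, he2⟩ := heq
    have hrR : r ≤ R := hr2
    have hrR' : r' ≤ R := hr2'
    have hrr : r = r' := by omega
    subst hrr
    have hfun : ∀ j : ℕ, j < R →
        min (ν (j + 1) - ν j) (2 * n) = min (ν' (j + 1) - ν' j) (2 * n) ∧
        min (τ (j + 1) - τ j) (2 * n) = min (τ' (j + 1) - τ' j) (2 * n) := by
      intro j hj
      have := congrFun he2 ⟨j, hj⟩
      simpa [Prod.ext_iff, Fin.ext_iff] using this
    have hinc : ∀ j, j < r → ν (j + 1) - ν j = ν' (j + 1) - ν' j := by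
      intro j hj
      have b1 := incr_bound n k r ν τ hP j
      have b2 := incr_bound n k r ν' τ' hP' j
      have := (hfun j (by omega)).1
      omega
    have hinc' : ∀ j, j < r → τ (j + 1) - τ j = τ' (j + 1) - τ' j := by
      intro j hj
      have b1 := incr_bound n k r ν τ hP j
      have b2 := incr_bound n k r ν' τ' hP' j
      have := (hfun j (by omega)).2
      omega
    obtain ⟨hν, hτ⟩ := partition_eq n k r ν ν' τ τ' hP hP' hinc hinc'
    subst hν; subst hτ; rfl
  have hcard2 : Nat.card (Fin (R + 1) × (Fin R → Fin (2 * n + 1) × Fin (2 * n + 1)))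
      = (R + 1) * ((2 * n + 1) * (2 * n + 1)) ^ R := by
    simp [Nat.card_eq_fintype_card, Fintype.card_fun]
  have hnat : (Set.ncard {q : ℕ × (ℕ → ℕ) × (ℕ → ℕ) |
          k ≤ q.1 ∧ q.1 ≤ R ∧
          IsRPartition n k q.1 q.2.1 q.2.2}) ≤ n ^ (10 * k) :=
    le_trans (hcard.trans_eq hcard2) (arith_bound n k R hn hk h3R)
  have hpos : (0 : ℝ) < (n : ℝ) := by positivity
  calc (Set.ncard {q : ℕ × (ℕ → ℕ) × (ℕ → ℕ) |
          k ≤ q.1 ∧ q.1 ≤ R ∧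
          IsRPartition n k q.1 q.2.1 q.2.2} : ℝ)
      ≤ ((n : ℝ)) ^ (10 * k) := by exact_mod_cast hnat
    _ = Real.exp (10 * k * Real.log n) := by
        rw [show (10 : ℝ) * k * Real.log n = ((10 * k : ℕ) : ℝ) * Real.log n by
              push_cast; ring,
            Real.exp_nat_mul, Real.exp_log hpos]
end

section
/- For any r-partition (ν, τ) of words of length kn, LC_{kn}(ν,τ) := Σ_{i=1}^r LCS(X_{ν_i},...,X_{ν_{i+1}-1}; Y_{τ_i},...,Y_{τ_{i+1}-1}) ≤ LC_{kn}, and LC_{kn} = max over all (ν,τ) ∈ B_{k,n} of LC_{kn}(ν,τ). -/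
/-- Membership of `(r, ν, τ)` in `B_{k,n}`. -/
def MemB (n k r : ℕ) (ν τ : ℕ → ℕ) : Prop :=
  k ≤ r ∧ r ≤ ⌈(2 * k * n : ℚ) / (2 * n - 1)⌉₊ ∧ IsRPartition n k r ν τ

section Aux

variable {α : Type*} {β : Type*}

lemma le_foldr_max {a : ℕ} {l : List ℕ} (h : a ∈ l) : a ≤ l.foldr max 0 := by
  induction l with
  | nil => cases h
  | cons b l ih =>
    rcases List.mem_cons.1 h with rfl | h
    · exact le_max_left _ _
    · exact le_trans (ih h) (le_max_right _ _)

lemma foldr_max_mem : ∀ l : List ℕ, l.foldr max 0 ∈ l ∨ l.foldr max 0 = 0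
  | [] => Or.inr rfl
  | b :: l => by
    rcases foldr_max_mem l with h | h
    · rcases le_total b (l.foldr max 0) with hb | hb
      · exact Or.inl (by simp [List.foldr_cons, max_eq_right hb, h])
      · exact Or.inl (by simp [List.foldr_cons, max_eq_left hb])
    · simp only [List.foldr_cons, h, Nat.max_zero]
      exact Or.inl List.mem_cons_self

lemma length_le_LCS [DecidableEq α] {s x y : List α} (hx : s.Sublist x) (hy : s.Sublist y) :
    s.length ≤ LCS x y := by
  apply le_foldr_max
  simp only [List.mem_map, List.mem_filter, List.mem_sublists]
  exact ⟨s, ⟨hx, by simpa using hy⟩, rfl⟩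

lemma exists_LCS [DecidableEq α] (x y : List α) :
    ∃ s : List α, s.Sublist x ∧ s.Sublist y ∧ s.length = LCS x y := by
  have H := foldr_max_mem (((x.sublists.filter (fun s => decide (s.Sublist y))).map List.length))
  rcases H with h | h
  · simp only [List.mem_map, List.mem_filter, List.mem_sublists] at h
    obtain ⟨s, ⟨hx, hy⟩, hl⟩ := h
    exact ⟨s, hx, by simpa using hy, hl⟩
  · exact ⟨[], List.nil_sublist x, List.nil_sublist y, by simpa [LCS] using h.symm⟩

lemma LCS_superadd [DecidableEq α] (x1 x2 y1 y2 : List α) :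
    LCS x1 y1 + LCS x2 y2 ≤ LCS (x1 ++ x2) (y1 ++ y2) := by
  obtain ⟨s1, h1x, h1y, h1⟩ := exists_LCS x1 y1
  obtain ⟨s2, h2x, h2y, h2⟩ := exists_LCS x2 y2
  have := length_le_LCS (h1x.append h2x) (h1y.append h2y)
  simpa [h1, h2] using this

lemma word_length (X : ℕ → α) (a m : ℕ) : (word X a m).length = m := by simp [word]

lemma word_append_s12 (X : ℕ → α) (a m m' : ℕ) :
    word X a m ++ word X (a + m) m' = word X a (m + m') := by
  simp only [word, List.range_add, List.map_append, List.map_map]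
  congr 1
  ext i
  simp [Function.comp, add_assoc, add_comm, add_left_comm]

lemma sum_LCS_le [DecidableEq α] (X Y : ℕ → α) (ν τ : ℕ → ℕ)
    (hν : Monotone ν) (hτ : Monotone τ) (m : ℕ) :
    ∑ i ∈ Finset.range m,
        LCS (word X (ν i) (ν (i + 1) - ν i)) (word Y (τ i) (τ (i + 1) - τ i))
      ≤ LCS (word X (ν 0) (ν m - ν 0)) (word Y (τ 0) (τ m - τ 0)) := by
  induction m with
  | zero => simp
  | succ m ih =>
    rw [Finset.sum_range_succ]
    have h1 : word X (ν 0) (ν m - ν 0) ++ word X (ν m) (ν (m + 1) - ν m)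
        = word X (ν 0) (ν (m + 1) - ν 0) := by
      have h0m : ν 0 ≤ ν m := hν (Nat.zero_le m)
      have hmm : ν m ≤ ν (m + 1) := hν (Nat.le_succ m)
      have key := word_append_s12 X (ν 0) (ν m - ν 0) (ν (m + 1) - ν m)
      rw [show ν 0 + (ν m - ν 0) = ν m by omega,
        show ν m - ν 0 + (ν (m + 1) - ν m) = ν (m + 1) - ν 0 by omega] at key
      exact key
    have h2 : word Y (τ 0) (τ m - τ 0) ++ word Y (τ m) (τ (m + 1) - τ m)
        = word Y (τ 0) (τ (m + 1) - τ 0) := by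
      have h0m : τ 0 ≤ τ m := hτ (Nat.zero_le m)
      have hmm : τ m ≤ τ (m + 1) := hτ (Nat.le_succ m)
      have key := word_append_s12 Y (τ 0) (τ m - τ 0) (τ (m + 1) - τ m)
      rw [show τ 0 + (τ m - τ 0) = τ m by omega,
        show τ m - τ 0 + (τ (m + 1) - τ m) = τ (m + 1) - τ 0 by omega] at key
      exact key
    calc _ ≤ LCS (word X (ν 0) (ν m - ν 0)) (word Y (τ 0) (τ m - τ 0))
            + LCS (word X (ν m) (ν (m + 1) - ν m)) (word Y (τ m) (τ (m + 1) - τ m)) :=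
          Nat.add_le_add_right ih _
      _ ≤ _ := by rw [← h1, ← h2]; exact LCS_superadd _ _ _ _

lemma cons_sublist_decomp {c : α} {s x : List α} (h : (c :: s).Sublist x) :
    ∃ x0 xr, x = x0 ++ c :: xr ∧ s.Sublist xr := by
  induction x with
  | nil => cases h
  | cons b xs ih =>
    cases h with
    | cons _ h' =>
      obtain ⟨x0, xr, rfl, hs⟩ := ih h'
      exact ⟨b :: x0, xr, rfl, hs⟩
    | cons_cons _ h' => exact ⟨[], xs, rfl, h'⟩

lemma cut_lemma : ∀ (s x y : List α) (t : ℕ), s.Sublist x → s.Sublist y →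
    t ≤ x.length + y.length →
    ∃ x1 x2 y1 y2 s1 s2 : List α,
      x = x1 ++ x2 ∧ y = y1 ++ y2 ∧ s = s1 ++ s2 ∧
      s1.Sublist x1 ∧ s1.Sublist y1 ∧ s2.Sublist x2 ∧ s2.Sublist y2 ∧
      (x1.length + y1.length = t ∨ x1.length + y1.length + 1 = t)
  | [], x, y, t, _, _, ht => by
    by_cases hxt : t ≤ x.length
    · refine ⟨x.take t, x.drop t, [], y, [], [], (x.take_append_drop t).symm, rfl, rfl,
        List.nil_sublist _, List.nil_sublist _, List.nil_sublist _, List.nil_sublist _, ?_⟩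
      left; simp [List.length_take, Nat.min_eq_left hxt]
    · push_neg at hxt
      refine ⟨x, [], y.take (t - x.length), y.drop (t - x.length), [], [],
        by simp, (y.take_append_drop _).symm, rfl,
        List.nil_sublist _, List.nil_sublist _, List.nil_sublist _, List.nil_sublist _, ?_⟩
      left
      simp only [List.length_take]
      omega
  | c :: s', x, y, t, hx, hy, ht => by
    obtain ⟨x0, xr, rfl, hsx⟩ := cons_sublist_decomp hx
    obtain ⟨y0, yr, rfl, hsy⟩ := cons_sublist_decomp hy
    have hlx : (x0 ++ c :: xr).length = x0.length + 1 + xr.length := by simp; omega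
    have hly : (y0 ++ c :: yr).length = y0.length + 1 + yr.length := by simp; omega
    rcases Nat.lt_or_ge (x0.length + y0.length + 1) t with hcase | hcase
    · -- pair goes left; recurse
      have ht' : t - (x0.length + y0.length + 2) ≤ xr.length + yr.length := by omega
      obtain ⟨xr1, xr2, yr1, yr2, s1', s2', hxe, hye, hse, h1x, h1y, h2x, h2y, hsz⟩ :=
        cut_lemma s' xr yr (t - (x0.length + y0.length + 2)) hsx hsy ht'
      refine ⟨x0 ++ c :: xr1, xr2, y0 ++ c :: yr1, yr2, c :: s1', s2',
        ?_, ?_, ?_, ?_, ?_, h2x, h2y, ?_⟩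
      · rw [hxe]; simp
      · rw [hye]; simp
      · rw [hse]; simp
      · exact ((h1x.cons₂ c).trans (List.sublist_append_right x0 _))
      · exact ((h1y.cons₂ c).trans (List.sublist_append_right y0 _))
      · simp only [List.length_append, List.length_cons]
        omega
    · rcases Nat.lt_or_ge (x0.length + y0.length) t with hc2 | hc2
      · -- t = u + v + 1 : straddle
        refine ⟨x0, c :: xr, y0, c :: yr, [], c :: s', rfl, rfl, rfl,
          List.nil_sublist _, List.nil_sublist _, hsx.cons₂ c, hsy.cons₂ c, ?_⟩
        right; omega
      · -- t ≤ u + v : cut within prefixes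
        by_cases hxt : t ≤ x0.length
        · refine ⟨x0.take t, x0.drop t ++ c :: xr, [], y0 ++ c :: yr, [], c :: s', ?_, rfl, rfl,
            List.nil_sublist _, List.nil_sublist _,
            (hsx.cons₂ c).trans (List.sublist_append_right _ _),
            (hsy.cons₂ c).trans (List.sublist_append_right _ _), ?_⟩
          · rw [← List.append_assoc, x0.take_append_drop t]
          · left; simp [List.length_take, Nat.min_eq_left hxt]
        · push_neg at hxt
          refine ⟨x0, c :: xr, y0.take (t - x0.length), y0.drop (t - x0.length) ++ c :: yr,
            [], c :: s', rfl, ?_, rfl,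
            List.nil_sublist _, List.nil_sublist _, hsx.cons₂ c,
            (hsy.cons₂ c).trans (List.sublist_append_right _ _), ?_⟩
          · rw [← List.append_assoc, y0.take_append_drop]
          · left; simp only [List.length_take]; omega

/-- the `j`-th block triple of a block list. -/
def blk (L : List (List α × List α × List α)) (j : ℕ) : List α × List α × List α :=
  L.getD j ([], [], [])

/-- combined size of the `j`-th block. -/
def bsize (L : List (List α × List α × List α)) (j : ℕ) : ℕ :=
  (blk L j).1.length + (blk L j).2.1.length

lemma blk_cons_zero (t : List α × List α × List α) (L : List (List α × List α × List α)) :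
    blk (t :: L) 0 = t := rfl

lemma blk_cons_succ (t : List α × List α × List α) (L : List (List α × List α × List α)) (j : ℕ) :
    blk (t :: L) (j + 1) = blk L j := rfl

lemma part_lemma (n : ℕ) (hn : 1 ≤ n) :
    ∀ (N : ℕ) (x y s : List α), x.length + y.length ≤ N → s.Sublist x → s.Sublist y →
    ∃ L : List (List α × List α × List α),
      1 ≤ L.length ∧
      (L.map fun t => t.1).flatten = x ∧
      (L.map fun t => t.2.1).flatten = y ∧
      (L.map fun t => t.2.2).flatten = s ∧
      (∀ j, (blk L j).2.2.Sublist (blk L j).1 ∧ (blk L j).2.2.Sublist (blk L j).2.1) ∧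
      (∀ j, j + 1 < L.length → bsize L j = 2 * n - 1 ∨ bsize L j = 2 * n) ∧
      (∀ j, j + 1 = L.length → bsize L j < 2 * n) ∧
      (2 ≤ L.length → (L.length - 1) * (2 * n - 1) < x.length + y.length) ∧
      x.length + y.length + 1 ≤ L.length * (2 * n) := by
  intro N
  induction N with
  | zero =>
    intro x y s hN hx hy
    refine ⟨[(x, y, s)], by simp, by simp, by simp, by simp, ?_, by simp, ?_, by simp, ?_⟩
    · intro j
      match j with
      | 0 => exact ⟨hx, hy⟩
      | j + 1 => simp [blk]
    · intro j hj
      simp only [List.length_singleton] at hj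
      match j, hj with
      | 0, _ => simp only [bsize, blk_cons_zero]; omega
    · simp only [List.length_singleton, one_mul]; omega
  | succ N ih =>
    intro x y s hN hx hy
    by_cases hsmall : x.length + y.length < 2 * n
    · refine ⟨[(x, y, s)], by simp, by simp, by simp, by simp, ?_, by simp, ?_, by simp, ?_⟩
      · intro j
        match j with
        | 0 => exact ⟨hx, hy⟩
        | j + 1 => simp [blk]
      · intro j hj
        simp only [List.length_singleton] at hj
        match j, hj with
        | 0, _ => simp only [bsize, blk_cons_zero]; omega
      · simp only [List.length_singleton, one_mul]; omega
    · push_neg at hsmall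
      obtain ⟨x1, x2, y1, y2, s1, s2, hxe, hye, hse, h1x, h1y, h2x, h2y, hsz⟩ :=
        cut_lemma s x y (2 * n) hx hy hsmall
      have hx2 : x2.length + y2.length ≤ N := by
        have : x.length = x1.length + x2.length := by rw [hxe]; simp
        have : y.length = y1.length + y2.length := by rw [hye]; simp
        omega
      obtain ⟨L', hL1, hfx, hfy, hfs, hsub, hbs, hlast, hcnt1, hcnt2⟩ := ih x2 y2 s2 hx2 h2x h2y
      refine ⟨(x1, y1, s1) :: L', by simp, ?_, ?_, ?_, ?_, ?_, ?_, ?_, ?_⟩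
      · simpa [hxe] using hfx
      · simpa [hye] using hfy
      · simpa [hse] using hfs
      · intro j
        match j with
        | 0 => exact ⟨h1x, h1y⟩
        | j + 1 => rw [blk_cons_succ]; exact hsub j
      · intro j hj
        match j with
        | 0 =>
          simp only [bsize, blk_cons_zero]
          omega
        | j + 1 =>
          simp only [List.length_cons] at hj
          have := hbs j (by omega)
          simpa [bsize, blk_cons_succ] using this
      · intro j hj
        match j with
        | 0 =>
          simp only [List.length_cons] at hj
          omega
        | j + 1 =>
          simp only [List.length_cons] at hj
          have := hlast j (by omega)
          simpa [bsize, blk_cons_succ] using this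
      · intro _
        have hxl : x.length = x1.length + x2.length := by rw [hxe]; simp
        have hyl : y.length = y1.length + y2.length := by rw [hye]; simp
        simp only [List.length_cons]
        rcases Nat.lt_or_ge L'.length 2 with h2 | h2
        · have : L'.length = 1 := by omega
          rw [this]
          omega
        · have := hcnt1 h2
          have hmul : (L'.length + 1 - 1) * (2 * n - 1)
              = (L'.length - 1) * (2 * n - 1) + (2 * n - 1) := by
            have h : L'.length + 1 - 1 = (L'.length - 1) + 1 := by omega
            rw [h, Nat.succ_mul]
          rw [hmul]
          omega
      · have hxl : x.length = x1.length + x2.length := by rw [hxe]; simp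
        have hyl : y.length = y1.length + y2.length := by rw [hye]; simp
        rw [List.length_cons, Nat.succ_mul]
        omega

lemma join_word (X : ℕ → α) : ∀ (Bs : List (List α)) (a : ℕ),
    Bs.flatten = word X a ((Bs.map List.length).sum) →
    ∀ j, Bs.getD j [] = word X (a + ((Bs.take j).map List.length).sum) (Bs.getD j []).length := by
  intro Bs
  induction Bs with
  | nil => intro a _ j; simp [word]
  | cons B Bs ih =>
    intro a h j
    have hw : word X a (B.length + (Bs.map List.length).sum)
        = word X a B.length ++ word X (a + B.length) ((Bs.map List.length).sum) :=
      (word_append_s12 X a _ _).symm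
    simp only [List.flatten_cons, List.map_cons, List.sum_cons] at h
    rw [hw] at h
    have hlen : B.length = (word X a B.length).length := (word_length X a B.length).symm
    obtain ⟨hB, hrest⟩ := List.append_inj h hlen
    match j with
    | 0 => simpa using hB
    | j + 1 =>
      have := ih (a + B.length) hrest j
      simp only [List.getD_cons_succ, List.take_succ_cons, List.map_cons, List.sum_cons]
      rw [this, word_length]
      congr 1
      omega

lemma sum_take_eq (f : β → ℕ) (d : β) : ∀ (L : List β) (j : ℕ), j ≤ L.length →
    ((L.take j).map f).sum = ∑ i ∈ Finset.range j, f (L.getD i d) := by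
  intro L
  induction L with
  | nil => intro j hj; simp at hj; subst hj; simp
  | cons t L ih =>
    intro j hj
    match j with
    | 0 => simp
    | j + 1 =>
      simp only [List.take_succ_cons, List.map_cons, List.sum_cons]
      rw [Finset.sum_range_succ']
      simp only [List.getD_cons_succ, List.getD_cons_zero]
      rw [ih j (by simpa using hj)]
      omega

/-- prefix-sum partition function. -/
def nuF (f : ℕ → ℕ) (r j : ℕ) : ℕ := 1 + ∑ i ∈ Finset.range (min j r), f i

lemma nuF_zero (f : ℕ → ℕ) (r : ℕ) : nuF f r 0 = 1 := by simp [nuF]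

lemma nuF_mono (f : ℕ → ℕ) (r : ℕ) : Monotone (nuF f r) := by
  intro a b hab
  unfold nuF
  have hsub : Finset.range (min a r) ⊆ Finset.range (min b r) :=
    Finset.range_subset_range.2 (by omega)
  exact Nat.add_le_add_left (Finset.sum_le_sum_of_subset hsub) 1

lemma nuF_of_le (f : ℕ → ℕ) {r j : ℕ} (h : j ≤ r) :
    nuF f r j = 1 + ∑ i ∈ Finset.range j, f i := by
  simp [nuF, Nat.min_eq_left h]

lemma nuF_pin (f : ℕ → ℕ) {r j : ℕ} (h : r ≤ j) :
    nuF f r j = 1 + ∑ i ∈ Finset.range r, f i := by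
  simp [nuF, Nat.min_eq_right h]

lemma nuF_diff (f : ℕ → ℕ) {r j : ℕ} (h : j < r) :
    nuF f r (j + 1) - nuF f r j = f j := by
  rw [nuF_of_le f (by omega : j + 1 ≤ r), nuF_of_le f (le_of_lt h), Finset.sum_range_succ]
  omega

end Aux

/-- For every `r`-partition `(ν, τ) ∈ B_{k,n}`, the sum of the blockwise LCS
lengths `LC_{kn}(ν, τ)` is at most `LC_{kn}`, and `LC_{kn}` is the maximum of
`LC_{kn}(ν, τ)` over `B_{k,n}`. -/
theorem lcs_partition_decomposition {α : Type*} [DecidableEq α]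
    (X Y : ℕ → α) (n k : ℕ) (hn : 1 ≤ n) (hk : 1 ≤ k) :
    (∀ (r : ℕ) (ν τ : ℕ → ℕ), MemB n k r ν τ →
      ∑ i ∈ Finset.range r,
          LCS (word X (ν i) (ν (i + 1) - ν i)) (word Y (τ i) (τ (i + 1) - τ i))
        ≤ LCS (word X 1 (k * n)) (word Y 1 (k * n))) ∧
    (∃ (r : ℕ) (ν τ : ℕ → ℕ), MemB n k r ν τ ∧
      ∑ i ∈ Finset.range r,
          LCS (word X (ν i) (ν (i + 1) - ν i)) (word Y (τ i) (τ (i + 1) - τ i))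
        = LCS (word X 1 (k * n)) (word Y 1 (k * n))) := by
  have hupper : ∀ (r : ℕ) (ν τ : ℕ → ℕ), MemB n k r ν τ →
      ∑ i ∈ Finset.range r,
          LCS (word X (ν i) (ν (i + 1) - ν i)) (word Y (τ i) (τ (i + 1) - τ i))
        ≤ LCS (word X 1 (k * n)) (word Y 1 (k * n)) := by
    rintro r ν τ ⟨-, -, hν0, hτ0, hνm, hτm, hνp, hτp, -, -⟩
    have h := sum_LCS_le X Y ν τ hνm hτm r
    rwa [hν0, hτ0, hνp r le_rfl, hτp r le_rfl, Nat.add_sub_cancel] at h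
  refine ⟨hupper, ?_⟩
  -- construct the optimal partition
  obtain ⟨s, hsx, hsy, hslen⟩ := exists_LCS (word X 1 (k * n)) (word Y 1 (k * n))
  have hxlen : (word X 1 (k * n)).length = k * n := word_length _ _ _
  have hylen : (word Y 1 (k * n)).length = k * n := word_length _ _ _
  obtain ⟨L, hL1, hfx, hfy, hfs, hsub, hbs, hlast, hcnt1, hcnt2⟩ :=
    part_lemma n hn (2 * (k * n)) (word X 1 (k * n)) (word Y 1 (k * n)) s
      (by rw [hxlen, hylen]; omega) hsx hsy
  set r := L.length with hr
  set xlen : ℕ → ℕ := fun i => (blk L i).1.length with hxlendef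
  set ylen : ℕ → ℕ := fun i => (blk L i).2.1.length with hylendef
  rw [hxlen, hylen] at hcnt1 hcnt2
  -- total lengths
  have hsumx : ∑ i ∈ Finset.range r, xlen i = k * n := by
    have h1 := sum_take_eq (fun t => t.1.length) (([] : List α), ([] : List α), ([] : List α))
      L r le_rfl
    rw [List.take_length] at h1
    have h2 : ((L.map fun t => t.1).map List.length).sum = k * n := by
      rw [← List.length_flatten, hfx, hxlen]
    rw [List.map_map] at h2
    calc ∑ i ∈ Finset.range r, xlen i
        = (L.map fun t => t.1.length).sum := h1.symm
      _ = k * n := h2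
  have hsumy : ∑ i ∈ Finset.range r, ylen i = k * n := by
    have h1 := sum_take_eq (fun t => t.2.1.length) (([] : List α), ([] : List α), ([] : List α))
      L r le_rfl
    rw [List.take_length] at h1
    have h2 : ((L.map fun t => t.2.1).map List.length).sum = k * n := by
      rw [← List.length_flatten, hfy, hylen]
    rw [List.map_map] at h2
    calc ∑ i ∈ Finset.range r, ylen i
        = (L.map fun t => t.2.1.length).sum := h1.symm
      _ = k * n := h2
  -- the partition functions
  have hmemB : MemB n k r (nuF xlen r) (nuF ylen r) := by
    have hklt : k < r := by
      by_contra hcon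
      push_neg at hcon
      have h2 : r * (2 * n) ≤ k * (2 * n) := Nat.mul_le_mul_right _ hcon
      have h3 : k * (2 * n) = k * n + k * n := by ring
      omega
    refine ⟨le_of_lt hklt, ?_, ?_⟩
    · -- r ≤ ceil
      have hr2 : 2 ≤ r := by omega
      have hlt : (r - 1) * (2 * n - 1) < 2 * k * n := by
        have := hcnt1 hr2
        have h3 : 2 * k * n = k * n + k * n := by ring
        omega
      have hden : (0 : ℚ) < 2 * (n : ℚ) - 1 := by
        have : (1 : ℚ) ≤ (n : ℚ) := by exact_mod_cast hn
        linarith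
      have hcast : ((2 * n - 1 : ℕ) : ℚ) = 2 * (n : ℚ) - 1 := by
        rw [Nat.cast_sub (by omega : 1 ≤ 2 * n)]
        push_cast
        ring
      have hlt2 : ((r - 1 : ℕ) : ℚ) < (2 * k * n : ℚ) / (2 * (n : ℚ) - 1) := by
        rw [lt_div_iff₀ hden, ← hcast]
        exact_mod_cast hlt
      have : r - 1 < ⌈(2 * k * n : ℚ) / (2 * n - 1)⌉₊ := by
        rw [Nat.lt_ceil]
        exact_mod_cast hlt2
      omega
    · -- IsRPartition
      refine ⟨nuF_zero _ _, nuF_zero _ _, nuF_mono _ _, nuF_mono _ _, ?_, ?_, ?_, ?_⟩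
      · intro i hi
        rw [nuF_pin _ hi, hsumx]
        omega
      · intro i hi
        rw [nuF_pin _ hi, hsumy]
        omega
      · intro j hj
        rw [nuF_diff _ (by omega : j < r), nuF_diff _ (by omega : j < r)]
        exact hbs j hj
      · intro j hj
        rw [nuF_diff _ (by omega : j < r), nuF_diff _ (by omega : j < r)]
        exact hlast j hj
  refine ⟨r, nuF xlen r, nuF ylen r, hmemB, ?_⟩
  have hle := hupper r (nuF xlen r) (nuF ylen r) hmemB
  refine le_antisymm hle ?_
  -- lower bound: LCS ≤ sum
  have hblockx : ∀ i, i < r →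
      word X (nuF xlen r i) (xlen i) = (blk L i).1 := by
    intro i hi
    have hjw := join_word X (L.map fun t => t.1) 1 ?_ i
    · have hgd : (L.map fun t => t.1).getD i [] = (blk L i).1 := by
        rw [List.getD_eq_getElem _ _ (by simpa using hi), List.getElem_map]
        rw [blk, List.getD_eq_getElem _ _ hi]
      rw [hgd] at hjw
      rw [hjw]
      congr 1
      rw [← List.map_take, List.map_map]
      have h1 := sum_take_eq (fun t => t.1.length) (([] : List α), ([] : List α), ([] : List α))
        L i (le_of_lt hi)
      rw [nuF_of_le _ (le_of_lt hi)]
      calc 1 + ∑ t ∈ Finset.range i, xlen t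
          = 1 + ((L.take i).map fun t => t.1.length).sum := by rw [h1]; exact rfl
        _ = 1 + ((L.take i).map (List.length ∘ fun t => t.1)).sum := rfl
    · rw [hfx]
      congr 1
      rw [List.map_map]
      have h1 := sum_take_eq (fun t => t.1.length) (([] : List α), ([] : List α), ([] : List α))
        L r le_rfl
      rw [List.take_length] at h1
      calc k * n = ∑ i ∈ Finset.range r, xlen i := hsumx.symm
        _ = (L.map fun t => t.1.length).sum := h1.symm
        _ = (L.map (List.length ∘ fun t => t.1)).sum := rfl
  have hblocky : ∀ i, i < r →
      word Y (nuF ylen r i) (ylen i) = (blk L i).2.1 := by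
    intro i hi
    have hjw := join_word Y (L.map fun t => t.2.1) 1 ?_ i
    · have hgd : (L.map fun t => t.2.1).getD i [] = (blk L i).2.1 := by
        rw [List.getD_eq_getElem _ _ (by simpa using hi), List.getElem_map]
        rw [blk, List.getD_eq_getElem _ _ hi]
      rw [hgd] at hjw
      rw [hjw]
      congr 1
      rw [← List.map_take, List.map_map]
      have h1 := sum_take_eq (fun t => t.2.1.length) (([] : List α), ([] : List α), ([] : List α))
        L i (le_of_lt hi)
      rw [nuF_of_le _ (le_of_lt hi)]
      calc 1 + ∑ t ∈ Finset.range i, ylen t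
          = 1 + ((L.take i).map fun t => t.2.1.length).sum := by rw [h1]; exact rfl
        _ = 1 + ((L.take i).map (List.length ∘ fun t => t.2.1)).sum := rfl
    · rw [hfy]
      congr 1
      rw [List.map_map]
      have h1 := sum_take_eq (fun t => t.2.1.length) (([] : List α), ([] : List α), ([] : List α))
        L r le_rfl
      rw [List.take_length] at h1
      calc k * n = ∑ i ∈ Finset.range r, ylen i := hsumy.symm
        _ = (L.map fun t => t.2.1.length).sum := h1.symm
        _ = (L.map (List.length ∘ fun t => t.2.1)).sum := rfl
  have hslen2 : ∑ i ∈ Finset.range r, (blk L i).2.2.length = s.length := by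
    have h1 := sum_take_eq (fun t => t.2.2.length) (([] : List α), ([] : List α), ([] : List α))
      L r le_rfl
    rw [List.take_length] at h1
    calc ∑ i ∈ Finset.range r, (blk L i).2.2.length
        = (L.map fun t => t.2.2.length).sum := h1.symm
      _ = (L.map (List.length ∘ fun t => t.2.2)).sum := rfl
      _ = ((L.map fun t => t.2.2).map List.length).sum := by rw [List.map_map]
      _ = (L.map fun t => t.2.2).flatten.length := List.length_flatten.symm
      _ = s.length := by rw [hfs]
  calc LCS (word X 1 (k * n)) (word Y 1 (k * n)) = s.length := hslen.symm
    _ = ∑ i ∈ Finset.range r, (blk L i).2.2.length := hslen2.symm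
    _ ≤ ∑ i ∈ Finset.range r,
        LCS (word X (nuF xlen r i) (nuF xlen r (i + 1) - nuF xlen r i))
          (word Y (nuF ylen r i) (nuF ylen r (i + 1) - nuF ylen r i)) := by
      apply Finset.sum_le_sum
      intro i hi
      rw [Finset.mem_range] at hi
      rw [nuF_diff _ hi, nuF_diff _ hi, hblockx i hi, hblocky i hi]
      exact length_le_LCS (hsub i).1 (hsub i).2
end

section
/- Suppose a concentration inequality P(LC_N - E[LC_N] ≥ t) ≤ exp(-t²/(A²N)) holds for all t ≥ 0 and all N, and E[LC_{kn}(ν,τ)] ≤ (1/2)⌈2kn/(2n-1)⌉(E[LC_{2n}] + 4nβ(kn)) for every partition (ν,τ) ∈ B_{k,n} with |B_{k,n}| ≤ exp(10 k ln n). Then, choosing t = 2A√10·√(ln n / n), one obtains E[LC_{kn}/(kn)] ≤ t + (1/k)⌈2kn/(2n-1)⌉(E[LC_{2n}]/(2n) + 2β(kn)) + exp(-30 k ln n). -/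
open MeasureTheory

/-- Combining the Hoeffding-type concentration inequality, the blockwise mean bound
over partitions, the bound on the number of partitions, and `LC_{kn} ≤ kn`, one
obtains, with `t = 2A√10·√(ln n / n)`,
`E[LC_{kn}/(kn)] ≤ t + (1/k)⌈2kn/(2n-1)⌉(E[LC_{2n}]/(2n) + 2β(kn)) + exp(-30 k ln n)`.
Here `L = LC_{kn}`, `Lb b = LC_{kn}(ν, τ)` for the partition `b = (ν, τ) ∈ B_{k,n}`,
`E2n = E[LC_{2n}]` and `β = β(kn)`. -/
theorem lcs_expectation_partition_bound
    {Ω ι : Type*} [MeasurableSpace Ω] [Fintype ι] [Nonempty ι]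
    (ℙ : Measure Ω) [IsProbabilityMeasure ℙ]
    (L : Ω → ℝ) (Lb : ι → Ω → ℝ)
    (hL : Measurable L) (hLb : ∀ b, Measurable (Lb b))
    (hLint : Integrable L ℙ) (hLbint : ∀ b, Integrable (Lb b) ℙ)
    (A : ℝ) (hA : 0 < A) (n k : ℕ) (hn : 2 ≤ n) (hk : 1 ≤ k)
    (E2n β : ℝ) (hE2n : 0 ≤ E2n) (hβ : 0 ≤ β)
    -- Hoeffding-type concentration for each `LC_{kn}(ν, τ)`, with `N = kn`
    (hconc : ∀ (b : ι) (t : ℝ), 0 ≤ t →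
      (ℙ {ω | t ≤ Lb b ω - ∫ ω', Lb b ω' ∂ℙ}).toReal
        ≤ Real.exp (-t ^ 2 / (A ^ 2 * (k * n))))
    -- blockwise mean bound: `E[LC_{kn}(ν,τ)] ≤ (1/2)⌈2kn/(2n-1)⌉(E[LC_{2n}] + 4nβ(kn))`
    (hmean : ∀ b : ι, ∫ ω, Lb b ω ∂ℙ
      ≤ (1 / 2) * (⌈(2 * (k : ℝ) * n) / (2 * n - 1)⌉ : ℝ) * (E2n + 4 * n * β))
    -- `|B_{k,n}| ≤ exp(10 k ln n)`
    (hcard : (Fintype.card ι : ℝ) ≤ Real.exp (10 * k * Real.log n))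
    -- `LC_{kn}` is attained by (is at most) one of the partitions
    (hmax : ∀ ω, ∃ b, L ω ≤ Lb b ω)
    -- `0 ≤ LC_{kn} ≤ kn`
    (hnonneg : ∀ ω, 0 ≤ L ω) (hbound : ∀ ω, L ω ≤ k * n) :
    (∫ ω, L ω ∂ℙ) / (k * n)
      ≤ 2 * A * Real.sqrt 10 * Real.sqrt (Real.log n / n)
        + (1 / k) * (⌈(2 * (k : ℝ) * n) / (2 * n - 1)⌉ : ℝ) * (E2n / (2 * n) + 2 * β)
        + Real.exp (-(30 : ℝ) * k * Real.log n) := by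
  have hn0 : (0:ℝ) < n := by positivity
  have hn1 : (1:ℝ) ≤ (n:ℝ) := by exact_mod_cast Nat.one_le_of_lt hn
  have hk0 : (0:ℝ) < k := by exact_mod_cast hk
  have hkn : (0:ℝ) < (k:ℝ) * n := by positivity
  have hlog : (0:ℝ) ≤ Real.log n := Real.log_nonneg hn1
  have hA0 : A ≠ 0 := ne_of_gt hA
  have hnne : (n:ℝ) ≠ 0 := ne_of_gt hn0
  have hkne : (k:ℝ) ≠ 0 := ne_of_gt hk0
  set t0 : ℝ := 2 * A * Real.sqrt 10 * Real.sqrt (Real.log n / n) with ht0def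
  have ht0 : 0 ≤ t0 := by positivity
  set t : ℝ := t0 * ((k:ℝ) * n) with htdef
  have ht : 0 ≤ t := mul_nonneg ht0 hkn.le
  set C : ℝ := (⌈(2 * (k : ℝ) * n) / (2 * n - 1)⌉ : ℝ) with hCdef
  have hC1 : (1:ℝ) ≤ C := by
    have h1 : (0:ℝ) < 2 * (n:ℝ) - 1 := by nlinarith
    have h2 : (0:ℝ) < (2 * (k : ℝ) * n) / (2 * n - 1) := by positivity
    have h3 := Int.ceil_pos.mpr h2
    rw [hCdef]
    exact_mod_cast h3
  have hC0 : (0:ℝ) ≤ C := le_trans zero_le_one hC1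
  set M : ℝ := (1/2) * C * (E2n + 4 * n * β) with hMdef
  have hM : 0 ≤ M := by
    apply mul_nonneg (mul_nonneg (by norm_num) hC0)
    positivity
  -- the bad event
  set Bad : Set Ω := ⋃ b, {ω | t ≤ Lb b ω - ∫ ω', Lb b ω' ∂ℙ} with hBaddef
  have hBadb : ∀ b, MeasurableSet {ω | t ≤ Lb b ω - ∫ ω', Lb b ω' ∂ℙ} := fun b =>
    measurableSet_le measurable_const ((hLb b).sub measurable_const)
  have hBadMeas : MeasurableSet Bad := MeasurableSet.iUnion hBadb
  -- exponent computation
  have h10 : Real.sqrt 10 ^ 2 = 10 := Real.sq_sqrt (by norm_num)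
  have hs : Real.sqrt (Real.log n / n) ^ 2 = Real.log n / n := Real.sq_sqrt (by positivity)
  have ht2 : t ^ 2 = 40 * A ^ 2 * ((Real.log n / n) * (((k:ℝ) * n) ^ 2)) := by
    rw [htdef, ht0def, mul_pow, mul_pow, mul_pow, h10, hs]; ring
  have hexp : -t ^ 2 / (A ^ 2 * ((k:ℝ) * n)) = -(40:ℝ) * k * Real.log n := by
    rw [ht2]; field_simp
  -- pointwise bound
  have hpt : ∀ ω, L ω ≤ M + t + Bad.indicator (fun _ => (k:ℝ) * n) ω := by
    intro ω
    by_cases hω : ω ∈ Bad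
    · rw [Set.indicator_of_mem hω]
      have hb := hbound ω
      push_cast at hb
      linarith
    · rw [Set.indicator_of_notMem hω]
      obtain ⟨b, hb⟩ := hmax ω
      have hnb : ¬ (t ≤ Lb b ω - ∫ ω', Lb b ω' ∂ℙ) := fun h =>
        hω (Set.mem_iUnion.mpr ⟨b, h⟩)
      push_neg at hnb
      have hmb := hmean b
      linarith
  -- integral bound
  have hind : Integrable (Bad.indicator fun _ => (k:ℝ) * n) ℙ :=
    (integrable_const _).indicator hBadMeas
  have hint : ∫ ω, L ω ∂ℙ ≤ M + t + ((k:ℝ)*n) * (ℙ Bad).toReal := by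
    have h1 : ∫ ω, L ω ∂ℙ ≤ ∫ ω, (M + t + Bad.indicator (fun _ => (k:ℝ)*n) ω) ∂ℙ :=
      integral_mono hLint ((integrable_const _).add hind) hpt
    rw [integral_add (integrable_const _) hind, integral_const,
        integral_indicator_const _ hBadMeas] at h1
    simpa [measure_univ, smul_eq_mul, mul_comm, measureReal_def] using h1
  -- probability of the bad event
  have hPBad : (ℙ Bad).toReal ≤ Real.exp (-(30:ℝ) * k * Real.log n) := by
    have h1 : ℙ Bad ≤ ∑ b, ℙ {ω | t ≤ Lb b ω - ∫ ω', Lb b ω' ∂ℙ} :=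
      measure_iUnion_fintype_le _ _
    have hne : (∑ b, ℙ {ω | t ≤ Lb b ω - ∫ ω', Lb b ω' ∂ℙ}) ≠ ⊤ := by
      exact (ENNReal.sum_lt_top.mpr (fun b _ => measure_lt_top ℙ _)).ne
    have h2 : (ℙ Bad).toReal ≤ ∑ b, (ℙ {ω | t ≤ Lb b ω - ∫ ω', Lb b ω' ∂ℙ}).toReal := by
      calc (ℙ Bad).toReal ≤ (∑ b, ℙ {ω | t ≤ Lb b ω - ∫ ω', Lb b ω' ∂ℙ}).toReal :=
            ENNReal.toReal_mono hne h1
        _ = ∑ b, (ℙ {ω | t ≤ Lb b ω - ∫ ω', Lb b ω' ∂ℙ}).toReal :=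
            ENNReal.toReal_sum (fun b _ => measure_ne_top ℙ _)
    have h3 : ∑ b, (ℙ {ω | t ≤ Lb b ω - ∫ ω', Lb b ω' ∂ℙ}).toReal
        ≤ (Fintype.card ι : ℝ) * Real.exp (-(40:ℝ) * k * Real.log n) := by
      calc ∑ b, (ℙ {ω | t ≤ Lb b ω - ∫ ω', Lb b ω' ∂ℙ}).toReal
          ≤ ∑ _b : ι, Real.exp (-(40:ℝ) * k * Real.log n) :=
            Finset.sum_le_sum (fun b _ => by
              have h := hconc b t ht
              rwa [hexp] at h)
        _ = (Fintype.card ι : ℝ) * Real.exp (-(40:ℝ) * k * Real.log n) := by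
            rw [Finset.sum_const, nsmul_eq_mul, Finset.card_univ]
    have h4 : (Fintype.card ι : ℝ) * Real.exp (-(40:ℝ) * k * Real.log n)
        ≤ Real.exp (-(30:ℝ) * k * Real.log n) := by
      calc (Fintype.card ι : ℝ) * Real.exp (-(40:ℝ) * k * Real.log n)
          ≤ Real.exp (10 * k * Real.log n) * Real.exp (-(40:ℝ) * k * Real.log n) :=
            mul_le_mul_of_nonneg_right hcard (Real.exp_nonneg _)
        _ = Real.exp (-(30:ℝ) * k * Real.log n) := by
            rw [← Real.exp_add]; congr 1; ring
    linarith
  -- conclude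
  have heq : (M + t + ((k:ℝ)*n) * (ℙ Bad).toReal) / ((k:ℝ)*n)
      = t0 + (1/(k:ℝ)) * C * (E2n / (2*n) + 2*β) + (ℙ Bad).toReal := by
    rw [hMdef, htdef]; field_simp; ring
  calc (∫ ω, L ω ∂ℙ) / ((k:ℝ) * n)
      ≤ (M + t + ((k:ℝ)*n) * (ℙ Bad).toReal) / ((k:ℝ)*n) := by
        exact (div_le_div_iff_of_pos_right hkn).mpr hint
    _ = t0 + (1/(k:ℝ)) * C * (E2n / (2*n) + 2*β) + (ℙ Bad).toReal := heq
    _ ≤ t0 + (1/(k:ℝ)) * C * (E2n / (2*n) + 2*β) + Real.exp (-(30:ℝ) * k * Real.log n) := by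
        linarith
end
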